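/- arXiv:2201.12487 — 3 statements merged into one kernel-verified Lean document; each statement's English description precedes it below -/
import Mathlib

section
/- Let d ≥ 1 and J ≥ 1, let x_1, …, x_J ∈ ℝ^d be a counterfactual plan, and let Θ = {θ ∈ ℝ^d : x_j^⊤θ ≥ 0 for all j ∈ [J]}. Fix ρ ≥ 0, μ̂ ∈ ℝ^d and a symmetric positive semidefinite matrix Σ̂ ∈ ℝ^{d×d}. Let U⋆ be the optimal value of the semidefinite program: infimum of z₀ + γ(ρ² − ‖μ̂‖₂² − Tr(Σ̂)) + q + Tr(Q) over variables γ ≥ 0, z₀ ∈ ℝ, z ∈ ℝ^d, Z symmetric positive semidefinite, q ≥ 0, Q symmetric positive semidefinite, λ ∈ ℝ₊^J, subject to: (a) the block matrix [[γI − Z, γΣ̂^{1/2}],[γΣ̂^{1/2}, Q]] is positive semidefinite; (b) [[γI − Z, γμ̂ + z],[(γμ̂ + z)^⊤, q]] is positive semidefinite; (c) [[Z, z],[z^⊤, z₀]] is positive semidefinite; and (d) [[Z, z],[z^⊤, z₀ − 1]] ⪰ Σ_{j∈[J]} λ_j [[0, x_j/2],[x_j^⊤/2, 0]] in the Loewner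 order. Then sup_{Q ∈ 𝔹} Q(θ̃ ∈ Θ) ≤ U⋆, where 𝔹 is the set of Borel probability measures Q on ℝ^d whose mean vector μ and covariance matrix Σ exist and satisfy 𝔾((μ, Σ), (μ̂, Σ̂)) ≤ ρ. -/
open MeasureTheory Matrix Classical

noncomputable section

/-- Positive semidefinite square root of a matrix (junk value `0` if not PSD). -/
noncomputable def matSqrt {d : ℕ} (A : Matrix (Fin d) (Fin d) ℝ) : Matrix (Fin d) (Fin d) ℝ :=
  if h : A.PosSemidef then
    (h.1.eigenvectorUnitary : Matrix (Fin d) (Fin d) ℝ) *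
      diagonal (fun i => Real.sqrt (h.1.eigenvalues i)) *
      (star h.1.eigenvectorUnitary : Matrix (Fin d) (Fin d) ℝ)
  else 0

/-- Euclidean norm on `Fin d → ℝ`. -/
noncomputable def euclNorm {d : ℕ} (v : Fin d → ℝ) : ℝ := Real.sqrt (∑ i, (v i) ^ 2)

/-- Gelbrich distance between two mean–covariance pairs. -/
noncomputable def gelbrich {d : ℕ} (μ₁ : Fin d → ℝ) (S₁ : Matrix (Fin d) (Fin d) ℝ)
    (μ₂ : Fin d → ℝ) (S₂ : Matrix (Fin d) (Fin d) ℝ) : ℝ :=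
  Real.sqrt ((∑ i, (μ₁ i - μ₂ i) ^ 2) +
    (S₁ + S₂ - (2 : ℝ) • matSqrt (matSqrt S₂ * S₁ * matSqrt S₂)).trace)

/-- The symmetric block matrix `[[Z, z], [zᵀ, c]]`. -/
def blk {d : ℕ} (Z : Matrix (Fin d) (Fin d) ℝ) (z : Fin d → ℝ) (c : ℝ) :
    Matrix (Fin d ⊕ Unit) (Fin d ⊕ Unit) ℝ :=
  Matrix.of fun p q =>
    match p, q with
    | Sum.inl i, Sum.inl j => Z i j
    | Sum.inl i, Sum.inr _ => z i
    | Sum.inr _, Sum.inl j => z j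
    | Sum.inr _, Sum.inr _ => c

/-- The block matrix `[[A, B], [C, D]]` with four `d × d` blocks. -/
def blk2 {d : ℕ} (A B C D : Matrix (Fin d) (Fin d) ℝ) :
    Matrix (Fin d ⊕ Fin d) (Fin d ⊕ Fin d) ℝ :=
  Matrix.fromBlocks A B C D

/-- Set of favorable parameters `Θ({x_j}) = {θ : x_jᵀθ ≥ 0 ∀ j}`. -/
def favSet {d J : ℕ} (x : Fin J → Fin d → ℝ) : Set (Fin d → ℝ) :=
  { θ | ∀ j, 0 ≤ x j ⬝ᵥ θ }

/-- `Q` has mean vector `μ`: every coordinate is integrable with the prescribed integral. -/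
def hasMean {d : ℕ} (Q : Measure (Fin d → ℝ)) (μ : Fin d → ℝ) : Prop :=
  ∀ i, Integrable (fun θ => θ i) Q ∧ ∫ θ, θ i ∂Q = μ i

/-- `Q` has covariance matrix `S` around the mean `μ`. -/
def hasCov {d : ℕ} (Q : Measure (Fin d → ℝ)) (μ : Fin d → ℝ)
    (S : Matrix (Fin d) (Fin d) ℝ) : Prop :=
  ∀ i j, Integrable (fun θ => (θ i - μ i) * (θ j - μ j)) Q ∧
    ∫ θ, (θ i - μ i) * (θ j - μ j) ∂Q = S i j

/-- Membership in the ambiguity set `𝔹`: `Q` is a Borel probability measure whose mean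
vector `μ` and covariance matrix `S` exist and satisfy `𝔾((μ, S), (μ̂, Σ̂)) ≤ ρ`. -/
def inAmbiguity {d : ℕ} (μhat : Fin d → ℝ) (Shat : Matrix (Fin d) (Fin d) ℝ) (ρ : ℝ)
    (Q : Measure (Fin d → ℝ)) : Prop :=
  IsProbabilityMeasure Q ∧
    ∃ (μ : Fin d → ℝ) (S : Matrix (Fin d) (Fin d) ℝ),
      S.PosSemidef ∧ hasMean Q μ ∧ hasCov Q μ S ∧ gelbrich μ S μhat Shat ≤ ρ

/-- Feasibility for the upper-bound semidefinite program of Theorem 2. -/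
def UFeas {d J : ℕ} (x : Fin J → Fin d → ℝ) (μhat : Fin d → ℝ)
    (Shat : Matrix (Fin d) (Fin d) ℝ)
    (γ z₀ : ℝ) (z : Fin d → ℝ) (Z : Matrix (Fin d) (Fin d) ℝ) (q : ℝ)
    (Qm : Matrix (Fin d) (Fin d) ℝ) (lam : Fin J → ℝ) : Prop :=
  0 ≤ γ ∧ Z.PosSemidef ∧ 0 ≤ q ∧ Qm.PosSemidef ∧ (∀ j, 0 ≤ lam j) ∧
  (blk2 (γ • (1 : Matrix (Fin d) (Fin d) ℝ) - Z) (γ • matSqrt Shat) (γ • matSqrt Shat)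
    Qm).PosSemidef ∧
  (blk (γ • (1 : Matrix (Fin d) (Fin d) ℝ) - Z) (γ • μhat + z) q).PosSemidef ∧
  (blk Z z z₀).PosSemidef ∧
  (blk Z z (z₀ - 1) - ∑ j, lam j • blk 0 ((1 / 2 : ℝ) • x j) 0).PosSemidef

/-- Optimal value `U⋆` of the upper-bound semidefinite program of Theorem 2. -/
noncomputable def Ustar {d J : ℕ} (x : Fin J → Fin d → ℝ) (μhat : Fin d → ℝ)
    (Shat : Matrix (Fin d) (Fin d) ℝ) (ρ : ℝ) : ℝ :=
  sInf { v | ∃ (γ z₀ : ℝ) (z : Fin d → ℝ) (Z : Matrix (Fin d) (Fin d) ℝ) (q : ℝ)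
      (Qm : Matrix (Fin d) (Fin d) ℝ) (lam : Fin J → ℝ),
      UFeas x μhat Shat γ z₀ z Z q Qm lam ∧
      v = z₀ + γ * (ρ ^ 2 - (∑ i, (μhat i) ^ 2) - Shat.trace) + q + Qm.trace }

/-! ### Auxiliary lemmas -/

lemma matSqrt_psd {d : ℕ} {A : Matrix (Fin d) (Fin d) ℝ} (hA : A.PosSemidef) :
    (matSqrt A).PosSemidef := by
  rw [matSqrt, dif_pos hA, Matrix.star_eq_conjTranspose]
  exact (PosSemidef.diagonal (Pi.le_def.mpr fun i => Real.sqrt_nonneg _)).mul_mul_conjTranspose_same _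

lemma psd_spec_nonneg {d : ℕ} {A : Matrix (Fin d) (Fin d) ℝ} (hA : A.PosSemidef) :
    ∀ x ∈ spectrum ℝ A, 0 ≤ x := by
  rw [hA.1.spectrum_real_eq_range_eigenvalues]
  rintro _ ⟨i, rfl⟩
  exact hA.eigenvalues_nonneg i

lemma matSqrt_eq_cfc {d : ℕ} {A : Matrix (Fin d) (Fin d) ℝ} (hA : A.PosSemidef) :
    matSqrt A = cfc Real.sqrt A := by
  rw [matSqrt, dif_pos hA, hA.1.cfc_eq, IsHermitian.cfc, Unitary.conjStarAlgAut_apply]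
  rfl

lemma matSqrt_sq {d : ℕ} {A : Matrix (Fin d) (Fin d) ℝ} (hA : A.PosSemidef) :
    matSqrt (A ^ 2) = A := by
  have hsa : IsSelfAdjoint A := hA.1
  rw [matSqrt_eq_cfc (hA.pow 2), ← cfc_comp_pow Real.sqrt 2 A]
  conv_rhs => rw [← cfc_id' ℝ A]
  exact cfc_congr (fun x hx => Real.sqrt_sq (psd_spec_nonneg hA x hx))

lemma matSqrt_mul_self {d : ℕ} {A : Matrix (Fin d) (Fin d) ℝ} (hA : A.PosSemidef) :
    matSqrt A * matSqrt A = A := by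
  have hsa : IsSelfAdjoint A := hA.1
  rw [matSqrt_eq_cfc hA, ← cfc_mul Real.sqrt Real.sqrt A]
  conv_rhs => rw [← cfc_id' ℝ A]
  exact cfc_congr (fun x hx => Real.mul_self_sqrt (psd_spec_nonneg hA x hx))

lemma psd_transpose_eq {d : ℕ} {A : Matrix (Fin d) (Fin d) ℝ} (hA : A.PosSemidef) :
    Aᵀ = A := by
  have := hA.1
  rwa [Matrix.IsHermitian, Matrix.conjTranspose_eq_transpose_of_trivial] at this

lemma matSqrt_transpose {d : ℕ} {A : Matrix (Fin d) (Fin d) ℝ} (hA : A.PosSemidef) :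
    (matSqrt A)ᵀ = matSqrt A := psd_transpose_eq (matSqrt_psd hA)

set_option linter.unusedSectionVars false


variable {n m : Type*} [Fintype n] [Fintype m] [DecidableEq n]

lemma trace_nonneg_of_psd {A : Matrix n n ℝ} (hA : A.PosSemidef) : 0 ≤ A.trace := by
  rw [Matrix.trace]
  apply Finset.sum_nonneg
  intro i _
  have := hA.dotProduct_mulVec_nonneg (Pi.single i 1)
  simpa [Matrix.mulVec_single, dotProduct, Pi.single_apply] using this

lemma psd_exists_ct_mul_self {A : Matrix n n ℝ} (hA : A.PosSemidef) :
    ∃ C : Matrix n n ℝ, A = Cᴴ * C := by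
  refine ⟨diagonal (fun i => Real.sqrt (hA.1.eigenvalues i)) *
    star (hA.1.eigenvectorUnitary : Matrix n n ℝ), ?_⟩
  conv_lhs => rw [hA.1.spectral_theorem, Unitary.conjStarAlgAut_apply]
  rw [Matrix.conjTranspose_mul, Matrix.star_eq_conjTranspose, Matrix.conjTranspose_conjTranspose,
    Matrix.diagonal_conjTranspose, ← Matrix.mul_assoc, Matrix.mul_assoc _ (diagonal _) (diagonal _),
    diagonal_mul_diagonal]
  congr 2
  congr 1
  funext i
  simp [Real.mul_self_sqrt (hA.eigenvalues_nonneg i)]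

lemma trace_mul_nonneg_of_psd [DecidableEq n] {A B : Matrix n n ℝ} (hA : A.PosSemidef)
    (hB : B.PosSemidef) : 0 ≤ (A * B).trace := by
  obtain ⟨C, rfl⟩ := psd_exists_ct_mul_self hA
  rw [Matrix.mul_assoc, Matrix.trace_mul_comm]
  exact trace_nonneg_of_psd (by simpa using hB.mul_mul_conjTranspose_same C)

lemma blk_qform {d : ℕ} (Z : Matrix (Fin d) (Fin d) ℝ) (z : Fin d → ℝ) (c : ℝ)
    (v : Fin d → ℝ) (t : ℝ) :
    (Sum.elim v (fun _ => t)) ⬝ᵥ ((blk Z z c) *ᵥ (Sum.elim v (fun _ => t)))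
      = v ⬝ᵥ Z *ᵥ v + 2 * t * (z ⬝ᵥ v) + c * t ^ 2 := by
  simp only [dotProduct, Matrix.mulVec, Fintype.sum_sum_type, blk, Matrix.of_apply,
    Sum.elim_inl, Sum.elim_inr, Finset.univ_unique, Finset.sum_const, Finset.card_singleton,
    one_smul, mul_add, Finset.sum_add_distrib]
  rw [show ∑ i, v i * (z i * t) = t * ∑ i, z i * v i from by
    rw [Finset.mul_sum]; exact Finset.sum_congr rfl fun i _ => by ring]
  ring

lemma blk_sub {d : ℕ} (A B : Matrix (Fin d) (Fin d) ℝ) (a b : Fin d → ℝ) (c e : ℝ) :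
    blk A a c - blk B b e = blk (A - B) (a - b) (c - e) := by
  ext p q; cases p <;> cases q <;> simp [blk]

lemma blk_sum {d J : ℕ} (lam : Fin J → ℝ) (y : Fin J → Fin d → ℝ) :
    ∑ j, lam j • blk 0 (y j) 0 = blk 0 (fun i => ∑ j, lam j * y j i) 0 := by
  ext p q
  rw [Matrix.sum_apply]
  cases p <;> cases q <;> simp [blk]
lemma psd_decomp {M : Matrix n n ℝ} (hM : M.PosSemidef) :
    ∃ (U : Matrix n n ℝ) (f : n → ℝ), Uᵀ * U = 1 ∧ M = U * diagonal f * Uᵀ := by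
  refine ⟨(hM.1.eigenvectorUnitary : Matrix n n ℝ), hM.1.eigenvalues, ?_, ?_⟩
  · have := (Matrix.mem_unitaryGroup_iff').mp (hM.1.eigenvectorUnitary).2
    rwa [Matrix.star_eq_conjTranspose, Matrix.conjTranspose_eq_transpose_of_trivial] at this
  · have := hM.1.spectral_theorem
    rw [Unitary.conjStarAlgAut_apply, Matrix.star_eq_conjTranspose,
      Matrix.conjTranspose_eq_transpose_of_trivial] at this
    simpa using this

lemma udu_mul {U : Matrix n n ℝ} (hU : Uᵀ * U = 1) (f g : n → ℝ) :
    (U * diagonal f * Uᵀ) * (U * diagonal g * Uᵀ)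
      = U * diagonal (fun i => f i * g i) * Uᵀ := by
  have h : (U * diagonal f * Uᵀ) * (U * diagonal g * Uᵀ)
      = U * diagonal f * (Uᵀ * U) * (diagonal g * Uᵀ) := by
    simp only [Matrix.mul_assoc]
  rw [h, hU, Matrix.mul_one, Matrix.mul_assoc, ← Matrix.mul_assoc (diagonal f),
    diagonal_mul_diagonal, ← Matrix.mul_assoc]

lemma udu_transpose (U : Matrix n n ℝ) (f : n → ℝ) :
    (U * diagonal f * Uᵀ)ᵀ = U * diagonal f * Uᵀ := by
  simp only [Matrix.transpose_mul, Matrix.transpose_transpose, Matrix.diagonal_transpose,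
    Matrix.mul_assoc]

lemma proj_fix {M P S : Matrix n n ℝ} (h1 : M * P * M = M) (h2 : (M * P)ᵀ = M * P)
    (hS : S * S = M) (hSt : Sᵀ = S) : M * P * S = S := by
  have hX : (M * P * S - S) * (M * P * S - S)ᵀ = 0 := by
    have e1 : (M * P * S - S)ᵀ = Sᵀ * (M * P)ᵀ - Sᵀ := by
      rw [Matrix.transpose_sub, Matrix.transpose_mul]
    have e2 : (M * P * S - S) * (S * (M * P) - S)
        = ((M * P) * (S * S)) * (M * P) - (M * P) * (S * S) - (S * S) * (M * P) + S * S := by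
      noncomm_ring
    rw [e1, h2, hSt, e2, hS, h1]
    abel
  have h0 : (M * P * S - S)ᵀ = 0 := Matrix.conjTranspose_mul_self_eq_zero.mp
    (by rw [Matrix.conjTranspose_eq_transpose_of_trivial, Matrix.transpose_transpose]; exact hX)
  have h3 : M * P * S - S = 0 := by simpa using congrArg Matrix.transpose h0
  exact sub_eq_zero.mp h3

lemma one_sub_proj_psd {P : Matrix n n ℝ} (hPt : Pᵀ = P) (hPP : P * P = P) :
    (1 - P).PosSemidef := by
  have h : (1 - P)ᴴ * (1 - P) = 1 - P := by
    rw [Matrix.conjTranspose_eq_transpose_of_trivial, Matrix.transpose_sub,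
      Matrix.transpose_one, hPt]
    noncomm_ring [hPP]
  rw [← h]
  exact Matrix.posSemidef_conjTranspose_mul_self _
lemma trace_fromBlocks (A : Matrix n n ℝ) (B C : Matrix n n ℝ) (D : Matrix n n ℝ) :
    (Matrix.fromBlocks A B C D).trace = A.trace + D.trace := by
  simp [Matrix.trace, Matrix.diag, Fintype.sum_sum_type, Matrix.fromBlocks]

lemma fromBlocks_corner_psd {X : Matrix n n ℝ} (hX : X.PosSemidef) :
    (Matrix.fromBlocks X 0 0 (0 : Matrix n n ℝ)).PosSemidef := by
  obtain ⟨C, rfl⟩ := psd_exists_ct_mul_self hX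
  have h : (Matrix.fromBlocks C 0 0 (0 : Matrix n n ℝ))ᴴ * Matrix.fromBlocks C 0 0 0
      = Matrix.fromBlocks (Cᴴ * C) 0 0 0 := by
    rw [Matrix.fromBlocks_conjTranspose, Matrix.fromBlocks_multiply]
    simp
  rw [← h]
  exact Matrix.posSemidef_conjTranspose_mul_self _

lemma trace_mul_transpose_right (A B : Matrix n n ℝ) : (A * Bᵀ).trace = (B * Aᵀ).trace := by
  rw [← Matrix.trace_transpose, Matrix.transpose_mul, Matrix.transpose_transpose,
    Matrix.trace_mul_comm]

lemma cov_trace_ineq {d : ℕ} {W B Qm Sg : Matrix (Fin d) (Fin d) ℝ} {γ : ℝ}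
    (hB : Bᵀ = B) (hSg : Sg.PosSemidef)
    (hblk : (Matrix.fromBlocks W (γ • B) (γ • B) Qm).PosSemidef) :
    2 * γ * (matSqrt (B * Sg * B)).trace ≤ (W * Sg).trace + Qm.trace := by
  set R := matSqrt Sg with hRdef
  have hRR : R * R = Sg := matSqrt_mul_self hSg
  have hRt : Rᵀ = R := matSqrt_transpose hSg
  set M := B * Sg * B with hMdef
  have hMpsd : M.PosSemidef := by
    have h : (R * B)ᴴ * (R * B) = M := by
      rw [Matrix.conjTranspose_eq_transpose_of_trivial, Matrix.transpose_mul, hRt, hB, hMdef,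
        ← hRR]
      noncomm_ring
    rw [← h]; exact Matrix.posSemidef_conjTranspose_mul_self _
  set S := matSqrt M with hSdef
  have hSS : S * S = M := matSqrt_mul_self hMpsd
  have hSt : Sᵀ = S := matSqrt_transpose hMpsd
  obtain ⟨U, f, hU, hMeq⟩ := psd_decomp hMpsd
  set Pi := U * Matrix.diagonal (fun i => (f i)⁻¹) * Uᵀ with hPidef
  have hMPiM : M * Pi * M = M := by
    rw [hMeq, hPidef, udu_mul hU, udu_mul hU]
    congr 2
    ext i
    rcases eq_or_ne (f i) 0 with h | h <;> field_simp [h]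
  have hPiMPi : Pi * M * Pi = Pi := by
    rw [hMeq, hPidef, udu_mul hU, udu_mul hU]
    congr 2
    ext i
    rcases eq_or_ne (f i) 0 with h | h <;> field_simp [h]
  have hMPit : (M * Pi)ᵀ = M * Pi := by
    rw [hMeq, hPidef, udu_mul hU, udu_transpose]
  have hPit : Piᵀ = Pi := by rw [hPidef]; exact udu_transpose _ _
  -- the coupling matrix
  set K := Sg * B * Pi * S with hKdef
  have hBK : B * K = S := by
    have : B * K = M * Pi * S := by rw [hKdef, hMdef]; noncomm_ring
    rw [this]
    exact proj_fix hMPiM hMPit hSS hSt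
  have hKt : Kᵀ = S * Pi * B * Sg := by
    rw [hKdef]
    simp only [Matrix.transpose_mul, hSt, hPit, hB, psd_transpose_eq hSg]
    noncomm_ring
  have hKKt : K * Kᵀ = Sg * B * Pi * B * Sg := by
    rw [hKdef, hKt]
    have e : Sg * B * Pi * S * (S * Pi * B * Sg) = Sg * B * (Pi * (S * S) * Pi) * B * Sg := by
      noncomm_ring
    rw [e, hSS, hPiMPi]
  -- Sg - K Kᵀ ⪰ 0
  have hSigKK : (Sg - K * Kᵀ).PosSemidef := by
    set P := (R * B) * Pi * (B * R) with hPdef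
    have hPt : Pᵀ = P := by
      rw [hPdef]
      simp only [Matrix.transpose_mul, hPit, hB, hRt]
      noncomm_ring
    have hPP : P * P = P := by
      have e : P * P = (R * B) * (Pi * ((B * R) * (R * B)) * Pi) * (B * R) := by
        rw [hPdef]; noncomm_ring
      have e2 : (B * R) * (R * B) = M := by rw [hMdef, ← hRR]; noncomm_ring
      rw [e, e2, hPiMPi, hPdef]
    have h1P : (1 - P).PosSemidef := one_sub_proj_psd hPt hPP
    have e3 : Sg - K * Kᵀ = Rᵀ * (1 - P) * R := by
      rw [hKKt, hPdef, hRt]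
      have : Sg = R * 1 * R := by rw [Matrix.mul_one, hRR]
      nth_rewrite 1 [this]
      have e4 : Sg * B * Pi * B * Sg = R * ((R * B) * Pi * (B * R)) * R := by
        rw [← hRR]; noncomm_ring
      rw [e4]
      noncomm_ring
    rw [e3, ← Matrix.conjTranspose_eq_transpose_of_trivial]
    exact h1P.conjTranspose_mul_mul_same R
  -- N is PSD
  set N := Matrix.fromBlocks Sg (-K) (-Kᵀ) (1 : Matrix (Fin d) (Fin d) ℝ) with hNdef
  have hNpsd : N.PosSemidef := by
    have hY : (Matrix.fromBlocks Kᵀ (-1) 0 (0 : Matrix (Fin d) (Fin d) ℝ))ᴴ *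
        Matrix.fromBlocks Kᵀ (-1) 0 0
        = Matrix.fromBlocks (K * Kᵀ) (-K) (-Kᵀ) 1 := by
      rw [Matrix.fromBlocks_conjTranspose, Matrix.fromBlocks_multiply]
      simp only [Matrix.conjTranspose_eq_transpose_of_trivial, Matrix.transpose_transpose,
        Matrix.transpose_neg, Matrix.transpose_one, Matrix.transpose_zero, Matrix.mul_zero,
        Matrix.zero_mul, Matrix.mul_one, Matrix.one_mul, Matrix.mul_neg, Matrix.neg_mul,
        add_zero, zero_add, neg_zero, neg_neg]
    have hN2 : N = Matrix.fromBlocks (Sg - K * Kᵀ) 0 0 0 +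
        Matrix.fromBlocks (K * Kᵀ) (-K) (-Kᵀ) 1 := by
      rw [hNdef, Matrix.fromBlocks_add, sub_add_cancel, zero_add, zero_add, zero_add]
    rw [hN2]
    refine (fromBlocks_corner_psd hSigKK).add ?_
    rw [← hY]
    exact Matrix.posSemidef_conjTranspose_mul_self _
  -- pairing
  have hpair := trace_mul_nonneg_of_psd hblk hNpsd
  rw [Matrix.fromBlocks_multiply] at hpair
  rw [trace_fromBlocks] at hpair
  have hBKt : (B * Kᵀ).trace = S.trace := by
    rw [trace_mul_transpose_right B K, hB, Matrix.trace_mul_comm, hBK]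
  have hBKtr : (B * K).trace = S.trace := by rw [hBK]
  have e5 : (W * Sg + γ • B * -Kᵀ).trace + (γ • B * -K + Qm * 1).trace
      = (W * Sg).trace + Qm.trace - 2 * γ * S.trace := by
    rw [Matrix.trace_add, Matrix.trace_add, Matrix.mul_one]
    have t1 : (γ • B * -Kᵀ).trace = -(γ * S.trace) := by
      rw [Matrix.mul_neg, Matrix.trace_neg, Matrix.smul_mul, Matrix.trace_smul, smul_eq_mul, hBKt]
    have t2 : (γ • B * -K).trace = -(γ * S.trace) := by
      rw [Matrix.mul_neg, Matrix.trace_neg, Matrix.smul_mul, Matrix.trace_smul, smul_eq_mul, hBKtr]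
    rw [t1, t2]; ring
  rw [e5] at hpair
  linarith

variable {d J : ℕ} {Q : Measure (Fin d → ℝ)} [IsProbabilityMeasure Q]
  {μ : Fin d → ℝ} {Sg : Matrix (Fin d) (Fin d) ℝ}

lemma integrable_mul (hm : hasMean Q μ) (hc : hasCov Q μ Sg) (i j : Fin d) :
    Integrable (fun θ => θ i * θ j) Q := by
  have h : (fun θ : Fin d → ℝ => θ i * θ j)
      = fun θ => (θ i - μ i) * (θ j - μ j) + (μ j * θ i + (μ i * θ j + -(μ i * μ j))) := by
    funext θ; ring
  rw [h]
  exact (hc i j).1.add (((hm i).1.const_mul (μ j)).add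
    (((hm j).1.const_mul (μ i)).add (integrable_const _)))

lemma integral_mul (hm : hasMean Q μ) (hc : hasCov Q μ Sg) (i j : Fin d) :
    ∫ θ, θ i * θ j ∂Q = Sg i j + μ i * μ j := by
  have h : (fun θ : Fin d → ℝ => θ i * θ j)
      = fun θ => (θ i - μ i) * (θ j - μ j) + (μ j * θ i + (μ i * θ j + -(μ i * μ j))) := by
    funext θ; ring
  have hg2 : Integrable (fun θ : Fin d → ℝ => μ i * θ j + -(μ i * μ j)) Q :=
    ((hm j).1.const_mul (μ i)).add (integrable_const _)
  have hg : Integrable (fun θ : Fin d → ℝ => μ j * θ i + (μ i * θ j + -(μ i * μ j))) Q :=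
    ((hm i).1.const_mul (μ j)).add hg2
  rw [h, integral_add (hc i j).1 hg, integral_add ((hm i).1.const_mul (μ j)) hg2,
    integral_add ((hm j).1.const_mul (μ i)) (integrable_const _),
    integral_const_mul, integral_const_mul, (hc i j).2, (hm i).2, (hm j).2]
  simp
  ring

lemma fexpand (Z : Matrix (Fin d) (Fin d) ℝ) (z : Fin d → ℝ) (z₀ : ℝ) :
    (fun θ : Fin d → ℝ => θ ⬝ᵥ Z *ᵥ θ + 2 * (z ⬝ᵥ θ) + z₀)
      = fun θ => (∑ i, ∑ j, Z i j * (θ i * θ j)) + ((∑ i, (2 * z i) * θ i) + z₀) := by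
  funext θ
  have h1 : θ ⬝ᵥ Z *ᵥ θ = ∑ i, ∑ j, Z i j * (θ i * θ j) := by
    simp only [dotProduct, Matrix.mulVec, Finset.mul_sum]
    exact Finset.sum_congr rfl fun i _ => Finset.sum_congr rfl fun j _ => by ring
  have h2 : 2 * (z ⬝ᵥ θ) = ∑ i, (2 * z i) * θ i := by
    simp only [dotProduct, Finset.mul_sum]
    exact Finset.sum_congr rfl fun i _ => by ring
  rw [h1, h2]; ring

lemma integrable_f (hm : hasMean Q μ) (hc : hasCov Q μ Sg)
    (Z : Matrix (Fin d) (Fin d) ℝ) (z : Fin d → ℝ) (z₀ : ℝ) :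
    Integrable (fun θ : Fin d → ℝ => θ ⬝ᵥ Z *ᵥ θ + 2 * (z ⬝ᵥ θ) + z₀) Q := by
  rw [fexpand]
  refine (integrable_finset_sum _ fun i _ => integrable_finset_sum _ fun j _ =>
    (integrable_mul hm hc i j).const_mul _).add
    ((integrable_finset_sum _ fun i _ => (hm i).1.const_mul _).add (integrable_const _))

lemma integral_f (hm : hasMean Q μ) (hc : hasCov Q μ Sg)
    (Z : Matrix (Fin d) (Fin d) ℝ) (z : Fin d → ℝ) (z₀ : ℝ) :
    ∫ θ, (θ ⬝ᵥ Z *ᵥ θ + 2 * (z ⬝ᵥ θ) + z₀) ∂Q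
      = (∑ i, ∑ j, Z i j * (Sg i j + μ i * μ j)) + ((∑ i, (2 * z i) * μ i) + z₀) := by
  have h1 : Integrable (fun θ : Fin d → ℝ => ∑ i, ∑ j, Z i j * (θ i * θ j)) Q :=
    integrable_finset_sum _ fun i _ => integrable_finset_sum _
      fun j _ => (integrable_mul hm hc i j).const_mul _
  have h2 : Integrable (fun θ : Fin d → ℝ => ∑ i, (2 * z i) * θ i) Q :=
    integrable_finset_sum _ fun i _ => (hm i).1.const_mul _
  have h3 : Integrable (fun θ : Fin d → ℝ => (∑ i, (2 * z i) * θ i) + z₀) Q :=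
    h2.add (integrable_const _)
  rw [fexpand, integral_add h1 h3, integral_add h2 (integrable_const _),
    integral_finset_sum (f := fun i (a : Fin d → ℝ) => ∑ j, Z i j * (a i * a j)) _ (fun i _ => integrable_finset_sum _
      fun j _ => (integrable_mul hm hc i j).const_mul _),
    integral_finset_sum (f := fun i (a : Fin d → ℝ) => (2 * z i) * a i) _ (fun i _ => (hm i).1.const_mul _)]
  congr 1
  · refine Finset.sum_congr rfl fun i _ => ?_
    rw [integral_finset_sum (f := fun j (a : Fin d → ℝ) => Z i j * (a i * a j)) _ (fun j _ => (integrable_mul hm hc i j).const_mul _)]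
    exact Finset.sum_congr rfl fun j _ => by rw [integral_const_mul, integral_mul hm hc i j]
  · congr 1
    · exact Finset.sum_congr rfl fun i _ => by rw [integral_const_mul, (hm i).2]
    · simp

lemma favSet_measurable (x : Fin J → Fin d → ℝ) : MeasurableSet (favSet x) := by
  have h : favSet x = ⋂ j, { θ : Fin d → ℝ | 0 ≤ x j ⬝ᵥ θ } := by
    ext θ; simp [favSet, Set.mem_iInter]
  rw [h]
  refine MeasurableSet.iInter fun j => ?_
  have hmeas : Measurable (fun θ : Fin d → ℝ => x j ⬝ᵥ θ) := by
    simp only [dotProduct]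
    exact Finset.measurable_sum _ fun i _ => (measurable_pi_apply i).const_mul _
  exact measurableSet_le measurable_const hmeas

lemma prob_le_integral {x : Fin J → Fin d → ℝ} {f : (Fin d → ℝ) → ℝ}
    (hfi : Integrable f Q) (hf0 : ∀ θ, 0 ≤ f θ) (hf1 : ∀ θ ∈ favSet x, 1 ≤ f θ) :
    (Q (favSet x)).toReal ≤ ∫ θ, f θ ∂Q := by
  rw [← measureReal_def, ← integral_indicator_one (favSet_measurable x)]
  refine integral_mono ((integrable_const (1:ℝ)).indicator (favSet_measurable x)) hfi ?_
  intro θ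
  by_cases h : θ ∈ favSet x
  · simpa [Set.indicator_of_mem h] using hf1 θ h
  · simpa [Set.indicator_of_notMem h] using hf0 θ

lemma star_pi_real {ι : Type*} (v : ι → ℝ) : star v = v := funext fun _ => star_trivial _

lemma key_bound {d J : ℕ} {x : Fin J → Fin d → ℝ} {μhat : Fin d → ℝ}
    {Shat : Matrix (Fin d) (Fin d) ℝ} (hShat : Shat.PosSemidef) {ρ γ z₀ q : ℝ}
    {z : Fin d → ℝ} {Z Qm : Matrix (Fin d) (Fin d) ℝ} {lam : Fin J → ℝ}
    (hF : UFeas x μhat Shat γ z₀ z Z q Qm lam)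
    {μ : Fin d → ℝ} {Sg : Matrix (Fin d) (Fin d) ℝ} (hSgp : Sg.PosSemidef)
    (hG : gelbrich μ Sg μhat Shat ≤ ρ) :
    (Z * Sg).trace + μ ⬝ᵥ Z *ᵥ μ + 2 * (z ⬝ᵥ μ) + z₀
      ≤ z₀ + γ * (ρ ^ 2 - (∑ i, (μhat i) ^ 2) - Shat.trace) + q + Qm.trace := by
  obtain ⟨hγ, hZ, hq, hQm, hlam, hA, hBc, hC, hD⟩ := hF
  set B := matSqrt Shat with hBdef
  set S := matSqrt (B * Sg * B) with hSdef
  -- covariance part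
  have hcov : 2 * γ * S.trace ≤ ((γ • (1 : Matrix (Fin d) (Fin d) ℝ) - Z) * Sg).trace
      + Qm.trace := cov_trace_ineq (matSqrt_transpose hShat) hSgp hA
  have hexp : ((γ • (1 : Matrix (Fin d) (Fin d) ℝ) - Z) * Sg).trace
      = γ * Sg.trace - (Z * Sg).trace := by
    rw [Matrix.sub_mul, Matrix.trace_sub, Matrix.smul_mul, Matrix.one_mul, Matrix.trace_smul,
      smul_eq_mul]
  -- mean part
  have hmean : 0 ≤ μ ⬝ᵥ (γ • (1 : Matrix (Fin d) (Fin d) ℝ) - Z) *ᵥ μ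
      + 2 * (-1) * ((γ • μhat + z) ⬝ᵥ μ) + q * (-1) ^ 2 := by
    have h := hBc.dotProduct_mulVec_nonneg (Sum.elim μ (fun _ => (-1 : ℝ)))
    rwa [star_pi_real, blk_qform] at h
  have e1 : μ ⬝ᵥ (γ • (1 : Matrix (Fin d) (Fin d) ℝ) - Z) *ᵥ μ
      = γ * (μ ⬝ᵥ μ) - μ ⬝ᵥ Z *ᵥ μ := by
    rw [Matrix.sub_mulVec, dotProduct_sub, Matrix.smul_mulVec, Matrix.one_mulVec,
      dotProduct_smul, smul_eq_mul]
  have e2 : (γ • μhat + z) ⬝ᵥ μ = γ * (μhat ⬝ᵥ μ) + z ⬝ᵥ μ := by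
    rw [add_dotProduct, smul_dotProduct, smul_eq_mul]
  rw [e1, e2] at hmean
  -- Gelbrich part
  have hGe : (μ ⬝ᵥ μ) - 2 * (μhat ⬝ᵥ μ) + (∑ i, μhat i ^ 2) + Sg.trace + Shat.trace
      - 2 * S.trace ≤ ρ ^ 2 := by
    have hsum : ∑ i, (μ i - μhat i) ^ 2
        = (μ ⬝ᵥ μ) - 2 * (μhat ⬝ᵥ μ) + ∑ i, μhat i ^ 2 := by
      simp only [dotProduct, Finset.mul_sum, ← Finset.sum_sub_distrib,
        ← Finset.sum_add_distrib]
      exact Finset.sum_congr rfl fun i _ => by ring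
    have htr : (Sg + Shat - (2 : ℝ) • S).trace = Sg.trace + Shat.trace - 2 * S.trace := by
      rw [Matrix.trace_sub, Matrix.trace_add, Matrix.trace_smul, smul_eq_mul]
    simp only [gelbrich, ← hBdef, ← hSdef] at hG
    have hsq : Real.sqrt ((∑ i, (μ i - μhat i) ^ 2) + (Sg + Shat - (2 : ℝ) • S).trace) ^ 2
        ≤ ρ ^ 2 := pow_le_pow_left₀ (Real.sqrt_nonneg _) hG 2
    rcases le_or_gt 0 ((∑ i, (μ i - μhat i) ^ 2) + (Sg + Shat - (2 : ℝ) • S).trace) with he | he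
    · rw [Real.sq_sqrt he] at hsq
      rw [hsum, htr] at hsq
      linarith
    · rw [hsum, htr] at he
      nlinarith [sq_nonneg ρ, Real.sqrt_nonneg
        ((∑ i, (μ i - μhat i) ^ 2) + (Sg + Shat - (2 : ℝ) • S).trace), hG]
  have h3 := mul_le_mul_of_nonneg_left hGe hγ
  rw [hexp] at hcov
  nlinarith [hcov, hmean, h3]

lemma qform_c_nonneg {d : ℕ} {Z : Matrix (Fin d) (Fin d) ℝ} {z : Fin d → ℝ} {z₀ : ℝ}
    (hC : (blk Z z z₀).PosSemidef) (v : Fin d → ℝ) :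
    0 ≤ v ⬝ᵥ Z *ᵥ v + 2 * (z ⬝ᵥ v) + z₀ := by
  have h := hC.dotProduct_mulVec_nonneg (Sum.elim v fun _ => (1 : ℝ))
  rw [star_pi_real, blk_qform] at h
  nlinarith [h]

lemma blk_zero {d : ℕ} : blk (0 : Matrix (Fin d) (Fin d) ℝ) 0 0 = 0 := by
  ext p q; cases p <;> cases q <;> simp [blk]

lemma blk_diag_psd {d : ℕ} : (blk (0 : Matrix (Fin d) (Fin d) ℝ) 0 1).PosSemidef := by
  have h : blk (0 : Matrix (Fin d) (Fin d) ℝ) 0 1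
      = Matrix.diagonal (Sum.elim (0 : Fin d → ℝ) (fun _ => 1)) := by
    ext p q
    cases p <;> cases q <;> simp [blk, Matrix.diagonal] <;> aesop
  rw [h]
  exact Matrix.PosSemidef.diagonal (fun p => by cases p <;> simp)

/-- **Theorem 2 (Upper bound).** -/
theorem validity_upper_bound {d J : ℕ} (hd : 1 ≤ d) (hJ : 1 ≤ J)
    (x : Fin J → Fin d → ℝ) (ρ : ℝ) (hρ : 0 ≤ ρ) (μhat : Fin d → ℝ)
    (Shat : Matrix (Fin d) (Fin d) ℝ) (hShat : Shat.PosSemidef) :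
    sSup { p | ∃ Q : Measure (Fin d → ℝ), inAmbiguity μhat Shat ρ Q ∧
        p = (Q (favSet x)).toReal } ≤ Ustar x μhat Shat ρ := by
  classical
  rw [Ustar]
  set T := { v | ∃ (γ z₀ : ℝ) (z : Fin d → ℝ) (Z : Matrix (Fin d) (Fin d) ℝ) (q : ℝ)
      (Qm : Matrix (Fin d) (Fin d) ℝ) (lam : Fin J → ℝ),
      UFeas x μhat Shat γ z₀ z Z q Qm lam ∧
      v = z₀ + γ * (ρ ^ 2 - (∑ i, (μhat i) ^ 2) - Shat.trace) + q + Qm.trace } with hTdef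
  -- the trivial feasible point with value 1
  have hfeas1 : (1 : ℝ) ∈ T := by
    refine ⟨0, 1, 0, 0, 0, 0, 0, ⟨le_refl 0, Matrix.PosSemidef.zero, le_refl 0,
      Matrix.PosSemidef.zero, fun j => le_refl 0, ?_, ?_, ?_, ?_⟩, ?_⟩
    · have h : blk2 ((0 : ℝ) • (1 : Matrix (Fin d) (Fin d) ℝ) - 0) ((0 : ℝ) • matSqrt Shat)
          ((0 : ℝ) • matSqrt Shat) (0 : Matrix (Fin d) (Fin d) ℝ) = 0 := by
        simp [blk2, Matrix.fromBlocks_zero]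
      rw [h]; exact Matrix.PosSemidef.zero
    · have h : blk ((0 : ℝ) • (1 : Matrix (Fin d) (Fin d) ℝ) - 0) ((0 : ℝ) • μhat + 0) (0 : ℝ)
          = blk 0 0 0 := by simp
      rw [h, blk_zero]; exact Matrix.PosSemidef.zero
    · exact blk_diag_psd
    · have h : blk (0 : Matrix (Fin d) (Fin d) ℝ) 0 ((1 : ℝ) - 1)
          - ∑ j, (0 : ℝ) • blk 0 ((1 / 2 : ℝ) • x j) 0 = 0 := by
        simp [blk_zero]
      show (blk (0 : Matrix (Fin d) (Fin d) ℝ) 0 ((1 : ℝ) - 1)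
          - ∑ j, (0 : ℝ) • blk 0 ((1 / 2 : ℝ) • x j) 0).PosSemidef
      rw [h]; exact Matrix.PosSemidef.zero
    · simp
  have hTne : T.Nonempty := ⟨1, hfeas1⟩
  have hub : ∀ p ∈ { p | ∃ Q : Measure (Fin d → ℝ), inAmbiguity μhat Shat ρ Q ∧
      p = (Q (favSet x)).toReal }, p ≤ sInf T := by
    rintro p ⟨Q, ⟨hQprob, μ, Sg, hSgp, hmeanQ, hcovQ, hGel⟩, rfl⟩
    haveI := hQprob
    refine le_csInf hTne ?_
    rintro v ⟨γ, z₀, z, Z, q, Qm, lam, hF, rfl⟩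
    obtain ⟨hγ, hZ, hq, hQm, hlam, hA, hBc, hC, hD⟩ := id hF
    have hf0 : ∀ θ, 0 ≤ θ ⬝ᵥ Z *ᵥ θ + 2 * (z ⬝ᵥ θ) + z₀ := fun θ => qform_c_nonneg hC θ
    have hf1 : ∀ θ ∈ favSet x, 1 ≤ θ ⬝ᵥ Z *ᵥ θ + 2 * (z ⬝ᵥ θ) + z₀ := by
      intro θ hθ
      have hmat : blk Z z (z₀ - 1) - ∑ j, lam j • blk 0 ((1 / 2 : ℝ) • x j) 0
          = blk (Z - 0) (z - fun i => ∑ j, lam j * ((1 / 2 : ℝ) • x j) i) (z₀ - 1 - 0) := by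
        rw [blk_sum, blk_sub]
      rw [hmat] at hD
      have h := hD.dotProduct_mulVec_nonneg (Sum.elim θ fun _ => (1 : ℝ))
      rw [star_pi_real, blk_qform] at h
      simp only [sub_zero] at h
      have hy : (fun i => ∑ j, lam j * ((1 / 2 : ℝ) • x j) i) ⬝ᵥ θ
          = ∑ j, lam j * (x j ⬝ᵥ θ) * (1 / 2) := by
        simp only [dotProduct, Pi.smul_apply, smul_eq_mul, Finset.sum_mul]
        rw [Finset.sum_comm]
        refine Finset.sum_congr rfl fun j _ => ?_
        rw [Finset.mul_sum, Finset.sum_mul]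
        exact Finset.sum_congr rfl fun i _ => by ring
      rw [sub_dotProduct, hy] at h
      have hynn : 0 ≤ ∑ j, lam j * (x j ⬝ᵥ θ) * (1 / 2) :=
        Finset.sum_nonneg fun j _ => mul_nonneg (mul_nonneg (hlam j) (hθ j)) (by norm_num)
      nlinarith [h, hynn]
    have hint : (Q (favSet x)).toReal ≤ ∫ θ, (θ ⬝ᵥ Z *ᵥ θ + 2 * (z ⬝ᵥ θ) + z₀) ∂Q :=
      prob_le_integral (integrable_f hmeanQ hcovQ Z z z₀) hf0 hf1
    have hIeq := integral_f hmeanQ hcovQ Z z z₀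
    have hsym : ∀ a b, Sg b a = Sg a b := fun a b => by
      calc Sg b a = Sgᵀ a b := (Matrix.transpose_apply _ _ _).symm
        _ = Sg a b := by rw [psd_transpose_eq hSgp]
    have hconv : (∑ i, ∑ j, Z i j * (Sg i j + μ i * μ j)) + ((∑ i, (2 * z i) * μ i) + z₀)
        = (Z * Sg).trace + μ ⬝ᵥ Z *ᵥ μ + 2 * (z ⬝ᵥ μ) + z₀ := by
      have htr2 : (Z * Sg).trace = ∑ i, ∑ j, Z i j * Sg i j := by
        simp only [Matrix.trace, Matrix.diag_apply, Matrix.mul_apply]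
        exact Finset.sum_congr rfl fun i _ => Finset.sum_congr rfl fun j _ => by rw [hsym]
      have hdp : μ ⬝ᵥ Z *ᵥ μ = ∑ i, ∑ j, Z i j * (μ i * μ j) := by
        simp only [dotProduct, Matrix.mulVec, Finset.mul_sum]
        exact Finset.sum_congr rfl fun i _ => Finset.sum_congr rfl fun j _ => by ring
      have hz : (∑ i, (2 * z i) * μ i) = 2 * (z ⬝ᵥ μ) := by
        rw [dotProduct, Finset.mul_sum]
        exact Finset.sum_congr rfl fun i _ => by ring
      have hsplit : ∑ i, ∑ j, Z i j * (Sg i j + μ i * μ j)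
          = (∑ i, ∑ j, Z i j * Sg i j) + ∑ i, ∑ j, Z i j * (μ i * μ j) := by
        rw [← Finset.sum_add_distrib]
        refine Finset.sum_congr rfl fun i _ => ?_
        rw [← Finset.sum_add_distrib]
        exact Finset.sum_congr rfl fun j _ => by ring
      rw [htr2, hdp, hz, hsplit]
      ring
    have hkb := key_bound hShat hF hSgp hGel
    calc (Q (favSet x)).toReal ≤ ∫ θ, (θ ⬝ᵥ Z *ᵥ θ + 2 * (z ⬝ᵥ θ) + z₀) ∂Q := hint
      _ = (∑ i, ∑ j, Z i j * (Sg i j + μ i * μ j)) + ((∑ i, (2 * z i) * μ i) + z₀) := hIeq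
      _ = (Z * Sg).trace + μ ⬝ᵥ Z *ᵥ μ + 2 * (z ⬝ᵥ μ) + z₀ := hconv
      _ ≤ z₀ + γ * (ρ ^ 2 - (∑ i, (μhat i) ^ 2) - Shat.trace) + q + Qm.trace := hkb
  have h0 : 0 ≤ sInf T := by
    refine le_csInf hTne ?_
    rintro v ⟨γ, z₀, z, Z, q, Qm, lam, hF, rfl⟩
    have hGself : gelbrich μhat Shat μhat Shat ≤ ρ := by
      have hBB := matSqrt_mul_self hShat
      have key : matSqrt Shat * Shat * matSqrt Shat = Shat ^ 2 := by
        calc matSqrt Shat * Shat * matSqrt Shat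
            = matSqrt Shat * (matSqrt Shat * matSqrt Shat) * matSqrt Shat := by rw [hBB]
          _ = (matSqrt Shat * matSqrt Shat) * (matSqrt Shat * matSqrt Shat) := by noncomm_ring
          _ = Shat ^ 2 := by rw [hBB, pow_two]
      have hsqrt : matSqrt (Shat ^ 2) = Shat := by
        exact matSqrt_sq hShat
      rw [gelbrich, key, hsqrt]
      have hzero : Shat + Shat - (2 : ℝ) • Shat = 0 := by
        rw [two_smul]; abel
      rw [hzero]
      simpa using hρ
    have hkb := key_bound hShat hF hShat hGself
    obtain ⟨hγ, hZ, hq, hQm, hlam, hA, hBc, hC, hD⟩ := hF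
    have h1 : 0 ≤ (Z * Shat).trace := trace_mul_nonneg_of_psd hZ hShat
    have h2 : 0 ≤ μhat ⬝ᵥ Z *ᵥ μhat + 2 * (z ⬝ᵥ μhat) + z₀ := qform_c_nonneg hC μhat
    linarith
  exact Real.sSup_le hub h0

end
end

section
/- Let d ≥ 1, let μ ∈ ℝ^d, let Σ ∈ ℝ^{d×d} be symmetric positive definite, and let S ⊆ ℝ^d be a nonempty convex set. Then the supremum, over all Borel probability measures Q on ℝ^d with mean vector μ and covariance matrix Σ, of Q(θ̃ ∈ S) equals 1/(1 + κ), where κ = inf_{θ ∈ S} (θ − μ)^⊤ Σ^{-1} (θ − μ). -/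
open MeasureTheory Matrix Classical

noncomputable section

section matrixAux

variable {d : ℕ}

lemma dot_symm (M : Matrix (Fin d) (Fin d) ℝ) (hM : M.IsHermitian) (x y : Fin d → ℝ) :
    x ⬝ᵥ (M *ᵥ y) = y ⬝ᵥ (M *ᵥ x) := by
  have hMt : Mᵀ = M := by
    have := hM.eq; rwa [Matrix.conjTranspose_eq_transpose_of_trivial] at this
  rw [Matrix.dotProduct_mulVec, ← Matrix.mulVec_transpose, hMt, dotProduct_comm]

lemma psd_nonneg {M : Matrix (Fin d) (Fin d) ℝ} (hM : M.PosSemidef) (x : Fin d → ℝ) :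
    0 ≤ x ⬝ᵥ (M *ᵥ x) := by
  simpa using hM.dotProduct_mulVec_nonneg x

lemma psd_cauchy_schwarz {M : Matrix (Fin d) (Fin d) ℝ} (hM : M.PosSemidef) (x y : Fin d → ℝ) :
    (x ⬝ᵥ (M *ᵥ y))^2 ≤ (x ⬝ᵥ (M *ᵥ x)) * (y ⬝ᵥ (M *ᵥ y)) := by
  have key : ∀ t : ℝ, 0 ≤ (y ⬝ᵥ (M *ᵥ y)) * (t*t) + (2 * (x ⬝ᵥ (M *ᵥ y))) * t + (x ⬝ᵥ (M *ᵥ x)) := by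
    intro t
    have h0 := psd_nonneg hM (x + t • y)
    have h1 : (x + t • y) ⬝ᵥ (M *ᵥ (x + t • y)) =
        (y ⬝ᵥ (M *ᵥ y)) * (t*t) + (2 * (x ⬝ᵥ (M *ᵥ y))) * t + (x ⬝ᵥ (M *ᵥ x)) := by
      rw [Matrix.mulVec_add, Matrix.mulVec_smul]
      rw [add_dotProduct, smul_dotProduct, dotProduct_add,
        dotProduct_add, dotProduct_smul, dotProduct_smul]
      have := dot_symm M hM.1 y x
      simp only [smul_eq_mul]
      rw [this]
      ring
    linarith [h0, h1 ▸ h0]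
  have := discrim_le_zero key
  simp only [discrim] at this
  nlinarith [this]


lemma quad_expand {d : ℕ} {M : Matrix (Fin d) (Fin d) ℝ} (hH : M.IsHermitian)
    (v w : Fin d → ℝ) (t : ℝ) :
    (v + t • w) ⬝ᵥ (M *ᵥ (v + t • w)) =
      v ⬝ᵥ (M *ᵥ v) + 2*t*(v ⬝ᵥ (M *ᵥ w)) + t^2*(w ⬝ᵥ (M *ᵥ w)) := by
  simp only [Matrix.mulVec_add, Matrix.mulVec_smul, add_dotProduct,
    smul_dotProduct, dotProduct_add, dotProduct_smul, smul_eq_mul, smul_add]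
  rw [dot_symm M hH w v]
  ring

end matrixAux

section discrete

variable {α : Type*} [MeasurableSpace α] [MeasurableSingletonClass α]
variable {ι : Type*} [Fintype ι]

def discMeasure (w : ι → ℝ) (pts : ι → α) : Measure α :=
  ∑ i, ENNReal.ofReal (w i) • Measure.dirac (pts i)

lemma discMeasure_apply (w : ι → ℝ) (pts : ι → α) (s : Set α) :
    discMeasure w pts s = ∑ i, ENNReal.ofReal (w i) * (Measure.dirac (pts i)) s := by
  rw [discMeasure, Measure.finset_sum_apply]
  simp [Measure.smul_apply, smul_eq_mul]

lemma discMeasure_prob (w : ι → ℝ) (pts : ι → α) (hw : ∀ i, 0 ≤ w i)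
    (hsum : ∑ i, w i = 1) : IsProbabilityMeasure (discMeasure w pts) := by
  constructor
  rw [discMeasure_apply]
  simp only [measure_univ, mul_one]
  rw [← ENNReal.ofReal_sum_of_nonneg (fun i _ => hw i), hsum, ENNReal.ofReal_one]

lemma discMeasure_integrable (w : ι → ℝ) (pts : ι → α) (f : α → ℝ) :
    Integrable f (discMeasure w pts) := by
  refine integrable_finset_sum_measure.2 fun i _ =>
    Integrable.smul_measure ((integrable_const (f (pts i))).congr (ae_eq_dirac f).symm)
      ENNReal.ofReal_ne_top

lemma discMeasure_integral (w : ι → ℝ) (pts : ι → α) (hw : ∀ i, 0 ≤ w i) (f : α → ℝ) :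
    ∫ x, f x ∂(discMeasure w pts) = ∑ i, w i * f (pts i) := by
  rw [discMeasure, integral_finset_sum_measure (fun i _ =>
    Integrable.smul_measure ((integrable_const (f (pts i))).congr (ae_eq_dirac f).symm)
      ENNReal.ofReal_ne_top)]
  refine Finset.sum_congr rfl fun i _ => ?_
  rw [integral_smul_measure, integral_dirac, ENNReal.toReal_ofReal (hw i), smul_eq_mul]

lemma discMeasure_le_toReal (w : ι → ℝ) (pts : ι → α) (hw : ∀ i, 0 ≤ w i)
    (hsum : ∑ i, w i = 1) {s : Set α} {i : ι} (hi : pts i ∈ s) :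
    w i ≤ (discMeasure w pts s).toReal := by
  have hprob : IsProbabilityMeasure (discMeasure w pts) := discMeasure_prob w pts hw hsum
  have h1 : ENNReal.ofReal (w i) ≤ discMeasure w pts s := by
    rw [discMeasure_apply]
    calc ENNReal.ofReal (w i) = ENNReal.ofReal (w i) * (Measure.dirac (pts i)) s := by
          rw [Measure.dirac_apply _ s, Set.indicator_of_mem hi, Pi.one_apply, mul_one]
        _ ≤ _ := Finset.single_le_sum (f := fun j => ENNReal.ofReal (w j) * (Measure.dirac (pts j)) s)
            (fun j _ => zero_le) (Finset.mem_univ i)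
  have hne : discMeasure w pts s ≠ ⊤ := (measure_lt_top _ _).ne
  calc w i = (ENNReal.ofReal (w i)).toReal := (ENNReal.toReal_ofReal (hw i)).symm
    _ ≤ _ := ENNReal.toReal_mono hne h1

end discrete

variable {d : ℕ}

lemma cont_quad (μ : Fin d → ℝ) (M : Matrix (Fin d) (Fin d) ℝ) :
    Continuous (fun θ : Fin d → ℝ => (θ - μ) ⬝ᵥ (M *ᵥ (θ - μ))) := by
  simp only [dotProduct, Matrix.mulVec]
  refine continuous_finset_sum _ fun i _ => ?_
  refine Continuous.mul ?_ ?_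
  · exact (by fun_prop : Continuous fun θ : Fin d → ℝ => (θ - μ) i)
  · exact continuous_finset_sum _ fun j _ => by fun_prop

lemma posdef_coercive (hd : 1 ≤ d) {M : Matrix (Fin d) (Fin d) ℝ} (hM : M.PosDef) :
    ∃ c > 0, ∀ x : Fin d → ℝ, c * ‖x‖^2 ≤ x ⬝ᵥ (M *ᵥ x) := by
  haveI : Nonempty (Fin d) := Fin.pos_iff_nonempty.mp hd
  have hconts : Continuous (fun x : Fin d → ℝ => x ⬝ᵥ (M *ᵥ x)) := by
    have := cont_quad (0 : Fin d → ℝ) M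
    simpa using this
  have hsne : (Metric.sphere (0 : Fin d → ℝ) 1).Nonempty :=
    ⟨fun _ => 1, by simp [pi_norm_const]⟩
  obtain ⟨x₀, hx₀s, hmin⟩ := (isCompact_sphere (0 : Fin d → ℝ) 1).exists_isMinOn hsne
    hconts.continuousOn
  have hx₀n : ‖x₀‖ = 1 := by simpa using hx₀s
  have hx₀ne : x₀ ≠ 0 := fun h => by simp [h] at hx₀n
  refine ⟨x₀ ⬝ᵥ (M *ᵥ x₀), by simpa using hM.dotProduct_mulVec_pos hx₀ne, ?_⟩
  intro x
  rcases eq_or_ne x 0 with rfl | hx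
  · simp
  · have hn : ‖x‖ ≠ 0 := norm_ne_zero_iff.2 hx
    set u : Fin d → ℝ := ‖x‖⁻¹ • x with hu
    have hus : u ∈ Metric.sphere (0 : Fin d → ℝ) 1 := by
      simp [hu, norm_smul, abs_of_nonneg (inv_nonneg.2 (norm_nonneg x)), inv_mul_cancel₀ hn]
    have h1 : x₀ ⬝ᵥ (M *ᵥ x₀) ≤ u ⬝ᵥ (M *ᵥ u) := hmin hus
    have hxu : x = ‖x‖ • u := by
      rw [hu, smul_smul, mul_inv_cancel₀ hn, one_smul]
    have h2 : x ⬝ᵥ (M *ᵥ x) = ‖x‖^2 * (u ⬝ᵥ (M *ᵥ u)) := by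
      conv_lhs => rw [hxu]
      rw [Matrix.mulVec_smul, smul_dotProduct, dotProduct_smul, smul_eq_mul,
        smul_eq_mul]
      ring
    rw [h2]
    have := mul_le_mul_of_nonneg_left h1 (by positivity : (0:ℝ) ≤ ‖x‖^2)
    linarith


noncomputable section min

lemma exists_minimizer (hd : 1 ≤ d) (μ : Fin d → ℝ) {M : Matrix (Fin d) (Fin d) ℝ}
    (hM : M.PosDef) {S : Set (Fin d → ℝ)} (hne : S.Nonempty) :
    ∃ θs ∈ closure S, ∀ θ ∈ closure S,
      (θs - μ) ⬝ᵥ (M *ᵥ (θs - μ)) ≤ (θ - μ) ⬝ᵥ (M *ᵥ (θ - μ)) := by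
  obtain ⟨c, hc, hcoer⟩ := posdef_coercive hd hM
  set q : (Fin d → ℝ) → ℝ := fun θ => (θ - μ) ⬝ᵥ (M *ᵥ (θ - μ)) with hq
  have hqc : Continuous q := cont_quad μ M
  obtain ⟨θ₁, hθ₁⟩ := hne
  set R := q θ₁ with hR
  set K := closure S ∩ {θ | q θ ≤ R} with hK
  have hKcl : IsClosed K := isClosed_closure.inter (isClosed_le hqc continuous_const)
  have hKsub : K ⊆ Metric.closedBall μ (Real.sqrt (R / c)) := by
    intro θ hθ
    have h1 : c * ‖θ - μ‖^2 ≤ q θ := hcoer (θ - μ)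
    have h2 : q θ ≤ R := hθ.2
    have h3 : ‖θ - μ‖^2 ≤ R / c := by
      rw [le_div_iff₀ hc]; linarith
    have h4 : ‖θ - μ‖ ≤ Real.sqrt (R / c) := by
      rw [← Real.sqrt_sq (norm_nonneg _)]
      exact Real.sqrt_le_sqrt h3
    simpa [Metric.mem_closedBall, dist_eq_norm] using h4
  have hKcomp : IsCompact K :=
    (isCompact_closedBall μ _).of_isClosed_subset hKcl hKsub
  have hKne : K.Nonempty := ⟨θ₁, subset_closure hθ₁, by simp [hK, hR]⟩
  obtain ⟨θs, hθsK, hmin⟩ := hKcomp.exists_isMinOn hKne hqc.continuousOn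
  refine ⟨θs, hθsK.1, fun θ hθ => ?_⟩
  by_cases h : q θ ≤ R
  · exact hmin ⟨hθ, h⟩
  · exact le_trans (hmin ⟨subset_closure hθ₁, by simp [hK, hR]⟩) (by push_neg at h; exact (le_of_lt h))

lemma first_order (μ : Fin d → ℝ) {M : Matrix (Fin d) (Fin d) ℝ}
    (hM : M.PosDef) {S : Set (Fin d → ℝ)} (hconv : Convex ℝ S) {θs : Fin d → ℝ}
    (hθs : θs ∈ closure S)
    (hmin : ∀ θ ∈ closure S,
      (θs - μ) ⬝ᵥ (M *ᵥ (θs - μ)) ≤ (θ - μ) ⬝ᵥ (M *ᵥ (θ - μ))) :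
    ∀ θ ∈ S, (θs - μ) ⬝ᵥ (M *ᵥ (θs - μ)) ≤ (θs - μ) ⬝ᵥ (M *ᵥ (θ - μ)) := by
  intro θ hθ
  set v := θs - μ with hv
  set w := θ - θs with hw
  set D := v ⬝ᵥ (M *ᵥ w) with hD
  set W := w ⬝ᵥ (M *ᵥ w) with hW
  have hWnn : 0 ≤ W := psd_nonneg hM.posSemidef w
  have hkey : ∀ t : ℝ, 0 ≤ t → t ≤ 1 → 0 ≤ 2*t*D + t^2*W := by
    intro t ht0 ht1
    have hmem : θs + t • w ∈ closure S := by
      have h2 := hconv.closure hθs (subset_closure hθ) (by linarith : (0:ℝ) ≤ 1 - t) ht0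
        (by ring)
      convert h2 using 1
      ext i
      simp [hw, smul_eq_mul]
      ring
    have hle := hmin _ hmem
    have hexp : (θs + t • w - μ) ⬝ᵥ (M *ᵥ (θs + t • w - μ)) =
        v ⬝ᵥ (M *ᵥ v) + 2*t*D + t^2*W := by
      have hveq : θs + t • w - μ = v + t • w := by
        simp only [hv]; ext i; simp [smul_eq_mul]; ring
      rw [hveq, quad_expand hM.1]
    rw [hexp] at hle
    linarith
  have hDnn : 0 ≤ D := by
    by_contra hD0
    push_neg at hD0
    set t := min 1 (-D/(W+1)) with ht
    have ht0 : 0 < t := lt_min one_pos (div_pos (by linarith) (by linarith))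
    have ht1 : t ≤ 1 := min_le_left _ _
    have h2 := hkey t (le_of_lt ht0) ht1
    have htle : t ≤ -D/(W+1) := min_le_right _ _
    have h3 : t*W ≤ (-D/(W+1))*W := mul_le_mul_of_nonneg_right htle hWnn
    have h4 : (-D/(W+1))*W ≤ -D := by
      rw [div_mul_eq_mul_div, div_le_iff₀ (by linarith)]
      nlinarith
    nlinarith
  have hfin : v ⬝ᵥ (M *ᵥ (θ - μ)) = v ⬝ᵥ (M *ᵥ v) + D := by
    have heq : θ - μ = v + w := by rw [hv, hw]; abel
    rw [heq, Matrix.mulVec_add, dotProduct_add]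
  linarith [hfin.ge]

lemma qmin_eq_sInf (μ : Fin d → ℝ) (M : Matrix (Fin d) (Fin d) ℝ)
    {S : Set (Fin d → ℝ)} (hne : S.Nonempty) {θs : Fin d → ℝ} (hθs : θs ∈ closure S)
    (hmin : ∀ θ ∈ S, (θs - μ) ⬝ᵥ (M *ᵥ (θs - μ)) ≤ (θ - μ) ⬝ᵥ (M *ᵥ (θ - μ))) :
    (θs - μ) ⬝ᵥ (M *ᵥ (θs - μ)) = sInf {k | ∃ θ ∈ S, k = (θ - μ) ⬝ᵥ (M *ᵥ (θ - μ))} := by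
  set q : (Fin d → ℝ) → ℝ := fun θ => (θ - μ) ⬝ᵥ (M *ᵥ (θ - μ)) with hq
  have hset : {k | ∃ θ ∈ S, k = q θ} = q '' S := by
    ext k; simp [Set.mem_image, eq_comm]
  rw [hset]
  have hbdd : BddBelow (q '' S) := ⟨q θs, by rintro k ⟨θ, hθ, rfl⟩; exact hmin θ hθ⟩
  have hub : q θs ≤ sInf (q '' S) :=
    le_csInf (hne.image q) (by rintro k ⟨θ, hθ, rfl⟩; exact hmin θ hθ)
  have hsub : closure (q '' S) ⊆ Set.Ici (sInf (q '' S)) :=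
    closure_minimal (fun x hx => csInf_le hbdd hx) isClosed_Ici
  have hmem : q θs ∈ closure (q '' S) :=
    (image_closure_subset_closure_image (cont_quad μ M)) ⟨θs, hθs, rfl⟩
  exact le_antisymm hub (hsub hmem)

end min

lemma upper_bound {d : ℕ} (μ : Fin d → ℝ) {Sm : Matrix (Fin d) (Fin d) ℝ} (hSm : Sm.PosDef)
    {S : Set (Fin d → ℝ)} {θs : Fin d → ℝ}
    (hfo : ∀ θ ∈ S, (θs - μ) ⬝ᵥ (Sm⁻¹ *ᵥ (θs - μ)) ≤ (θs - μ) ⬝ᵥ (Sm⁻¹ *ᵥ (θ - μ)))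
    {Q : Measure (Fin d → ℝ)} (hQ : IsProbabilityMeasure Q) (hm : hasMean Q μ)
    (hc : hasCov Q μ Sm) :
    (Q S).toReal ≤ 1 / (1 + (θs - μ) ⬝ᵥ (Sm⁻¹ *ᵥ (θs - μ))) := by
  set v := θs - μ with hv
  set κ := v ⬝ᵥ (Sm⁻¹ *ᵥ v) with hκdef
  have hκ : 0 ≤ κ := psd_nonneg hSm.inv.posSemidef v
  have h1κ : (0:ℝ) < 1 + κ := by linarith
  set a := Sm⁻¹ *ᵥ v with ha
  set L : (Fin d → ℝ) → ℝ := fun θ => ∑ i, a i * (θ i - μ i) with hL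
  have hint1 : Integrable L Q :=
    integrable_finset_sum _ fun i _ => ((hm i).1.sub (integrable_const (μ i))).const_mul (a i)
  have hLsq : (fun θ => L θ * L θ) =
      fun θ => ∑ i, ∑ j, (a i * a j) * ((θ i - μ i) * (θ j - μ j)) := by
    funext θ
    simp only [hL, Finset.sum_mul_sum]
    exact Finset.sum_congr rfl fun i _ => Finset.sum_congr rfl fun j _ => by ring
  have hint2 : Integrable (fun θ => L θ * L θ) Q := by
    rw [hLsq]
    exact integrable_finset_sum _ fun i _ => integrable_finset_sum _ fun j _ =>
      (hc i j).1.const_mul _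
  have hIL : ∫ θ, L θ ∂Q = 0 := by
    have h0 : ∫ θ, L θ ∂Q = ∑ i, ∫ θ, a i * (θ i - μ i) ∂Q :=
      integral_finset_sum _ (fun i _ =>
        ((hm i).1.sub (integrable_const (μ i))).const_mul (a i))
    rw [h0]
    refine Finset.sum_eq_zero fun i _ => ?_
    have h1 : ∫ θ, a i * (θ i - μ i) ∂Q = a i * ∫ θ, θ i - μ i ∂Q :=
      integral_const_mul (a i) _
    have h2 : ∫ θ, θ i - μ i ∂Q = (∫ θ, θ i ∂Q) - ∫ _, μ i ∂Q :=
      integral_sub (hm i).1 (integrable_const (μ i))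
    rw [h1, h2, (hm i).2, integral_const]
    simp
  have hIL2 : ∫ θ, L θ * L θ ∂Q = κ := by
    have h0 : ∫ θ, L θ * L θ ∂Q
        = ∑ i, ∫ θ, ∑ j, (a i * a j) * ((θ i - μ i) * (θ j - μ j)) ∂Q := by
      rw [show (fun θ => L θ * L θ) = fun θ => ∑ i, ∑ j,
        (a i * a j) * ((θ i - μ i) * (θ j - μ j)) from hLsq]
      exact integral_finset_sum _ (fun i _ => integrable_finset_sum _ fun j _ =>
        (hc i j).1.const_mul _)
    have hstep : ∀ i, ∫ θ, ∑ j, (a i * a j) * ((θ i - μ i) * (θ j - μ j)) ∂Q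
        = ∑ j, (a i * a j) * Sm i j := by
      intro i
      rw [integral_finset_sum _ (fun j _ => (hc i j).1.const_mul _)]
      refine Finset.sum_congr rfl fun j _ => ?_
      have h1 : ∫ θ, (a i * a j) * ((θ i - μ i) * (θ j - μ j)) ∂Q
          = (a i * a j) * ∫ θ, (θ i - μ i) * (θ j - μ j) ∂Q := integral_const_mul _ _
      rw [h1, (hc i j).2]
    rw [h0, Finset.sum_congr rfl fun i _ => hstep i]
    have hdet : IsUnit Sm.det := isUnit_iff_ne_zero.2 (ne_of_gt hSm.det_pos)
    have hSmv : Sm *ᵥ a = v := by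
      rw [ha, Matrix.mulVec_mulVec, Matrix.mul_nonsing_inv _ hdet, Matrix.one_mulVec]
    have : a ⬝ᵥ (Sm *ᵥ a) = κ := by
      rw [hSmv, dotProduct_comm]
    rw [← this]
    simp only [dotProduct, Matrix.mulVec, Finset.mul_sum]
    exact Finset.sum_congr rfl fun i _ => Finset.sum_congr rfl fun j _ => by ring
  have hgeq : (fun θ => (1 + L θ)^2) = fun θ => 1 + (2 * L θ + L θ * L θ) := by
    funext θ; ring
  have hg : Integrable (fun θ => (1 + L θ)^2) Q := by
    rw [hgeq]; exact (integrable_const 1).add ((hint1.const_mul 2).add hint2)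
  have hIg : ∫ θ, (1 + L θ)^2 ∂Q = 1 + κ := by
    have h2i : Integrable (fun θ => 2 * L θ + L θ * L θ) Q := (hint1.const_mul 2).add hint2
    have h1 : ∫ θ, (1 + L θ)^2 ∂Q = ∫ θ, 1 + (2 * L θ + L θ * L θ) ∂Q := by
      rw [hgeq]
    have h3 : ∫ θ, 1 + (2 * L θ + L θ * L θ) ∂Q
        = (∫ _, (1:ℝ) ∂Q) + ∫ θ, 2 * L θ + L θ * L θ ∂Q :=
      integral_add (integrable_const 1) h2i
    have h4 : ∫ θ, 2 * L θ + L θ * L θ ∂Q = (∫ θ, 2 * L θ ∂Q) + ∫ θ, L θ * L θ ∂Q :=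
      integral_add (hint1.const_mul 2) hint2
    have h5 : ∫ θ, 2 * L θ ∂Q = 2 * ∫ θ, L θ ∂Q := integral_const_mul 2 L
    rw [h1, h3, h4, h5, hIL, hIL2, integral_const]
    simp
  have hLbound : ∀ θ ∈ S, 1 + κ ≤ 1 + L θ := by
    intro θ hθ
    have h1 : L θ = a ⬝ᵥ (θ - μ) := by
      simp only [hL, dotProduct, Pi.sub_apply]
    have h2 : a ⬝ᵥ (θ - μ) = v ⬝ᵥ (Sm⁻¹ *ᵥ (θ - μ)) := by
      rw [ha, dotProduct_comm, dot_symm _ hSm.inv.isHermitian]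
    have := hfo θ hθ
    rw [h1, h2]
    linarith
  set E := {θ : Fin d → ℝ | (1 + κ)^2 ≤ (1 + L θ)^2} with hE
  have hsub : S ⊆ E := by
    intro θ hθ
    exact pow_le_pow_left₀ (le_of_lt h1κ) (hLbound θ hθ) 2
  have hmarkov := mul_meas_ge_le_integral_of_nonneg
    (Filter.Eventually.of_forall fun θ => sq_nonneg (1 + L θ)) hg ((1 + κ)^2)
  rw [hIg, measureReal_def] at hmarkov
  have hQSE : (Q S).toReal ≤ (Q E).toReal :=
    ENNReal.toReal_mono (measure_ne_top Q E) (measure_mono hsub)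
  have hsq : (0:ℝ) < (1 + κ)^2 := by positivity
  have hQE : (Q E).toReal ≤ (1 + κ) / (1 + κ)^2 := by
    rw [le_div_iff₀ hsq]; linarith [hmarkov]
  have heq : (1 + κ) / (1 + κ)^2 = 1 / (1 + κ) := by
    rw [sq]; field_simp
  linarith [hQSE, hQE, heq.le, heq.ge]

lemma construct {d : ℕ} (hd : 1 ≤ d) (μ : Fin d → ℝ) {Sm : Matrix (Fin d) (Fin d) ℝ}
    (hSm : Sm.PosDef) {S : Set (Fin d → ℝ)} {θ₀ : Fin d → ℝ} (hθ₀ : θ₀ ∈ S)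
    {p : ℝ} (hp0 : 0 < p) (hp1 : p < 1)
    (hpk : p * (1 + (θ₀ - μ) ⬝ᵥ (Sm⁻¹ *ᵥ (θ₀ - μ))) ≤ 1) :
    ∃ Q : Measure (Fin d → ℝ), IsProbabilityMeasure Q ∧ hasMean Q μ ∧ hasCov Q μ Sm ∧
      p ≤ (Q S).toReal := by
  have hdR : (0:ℝ) < d := by exact_mod_cast hd
  have h1p : (0:ℝ) < 1 - p := by linarith
  set v := θ₀ - μ with hv
  set k := v ⬝ᵥ (Sm⁻¹ *ᵥ v) with hk
  have hk0 : 0 ≤ k := psd_nonneg hSm.inv.posSemidef v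
  set t := p / (1 - p) with ht
  have ht0 : 0 ≤ t := le_of_lt (div_pos hp0 h1p)
  have htk : t * k ≤ 1 := by
    rw [ht, div_mul_eq_mul_div, div_le_one h1p]
    nlinarith
  set C := Sm - t • Matrix.vecMulVec v v with hC
  have hCentry : ∀ i j, C i j = Sm i j - t * (v i * v j) := by
    intro i j
    simp [hC, Matrix.sub_apply, Matrix.smul_apply, Matrix.vecMulVec_apply, smul_eq_mul]
  -- C is positive semidefinite
  have hdet : IsUnit Sm.det := isUnit_iff_ne_zero.2 (ne_of_gt hSm.det_pos)
  have hCpsd : C.PosSemidef := by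
    have hsym : ∀ a b, Sm a b = Sm b a := by
      intro a b
      have h := congrFun (congrFun hSm.1 a) b
      simpa [Matrix.conjTranspose_apply] using h.symm
    refine Matrix.PosSemidef.of_dotProduct_mulVec_nonneg ?_ ?_
    · ext i j
      simp only [hC, Matrix.conjTranspose_apply, Matrix.sub_apply, Matrix.smul_apply,
        Matrix.vecMulVec_apply, smul_eq_mul, star_trivial]
      rw [hsym j i]
      ring
    · intro x
      have hstar : star x = x := by simp
      rw [hstar]
      have hxC : x ⬝ᵥ (C *ᵥ x) = x ⬝ᵥ (Sm *ᵥ x) - t * (x ⬝ᵥ v)^2 := by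
        rw [hC, Matrix.sub_mulVec, dotProduct_sub, Matrix.smul_mulVec,
          dotProduct_smul]
        have : Matrix.vecMulVec v v *ᵥ x = (v ⬝ᵥ x) • v := by
          ext i
          simp only [Matrix.mulVec, Matrix.vecMulVec_apply, dotProduct, Pi.smul_apply,
            smul_eq_mul]
          rw [Finset.sum_mul]
          exact Finset.sum_congr rfl fun j _ => by ring
        rw [this, dotProduct_smul, smul_eq_mul, smul_eq_mul]
        rw [dotProduct_comm v x]
        ring
      have hu : Sm *ᵥ (Sm⁻¹ *ᵥ v) = v := by
        rw [Matrix.mulVec_mulVec, Matrix.mul_nonsing_inv _ hdet, Matrix.one_mulVec]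
      have hcs := psd_cauchy_schwarz hSm.posSemidef x (Sm⁻¹ *ᵥ v)
      rw [hu] at hcs
      have huv : (Sm⁻¹ *ᵥ v) ⬝ᵥ v = k := by
        rw [hk, dotProduct_comm]
      rw [huv] at hcs
      have hxSm : 0 ≤ x ⬝ᵥ (Sm *ᵥ x) := psd_nonneg hSm.posSemidef x
      have h3 : t * (x ⬝ᵥ v)^2 ≤ t * ((x ⬝ᵥ (Sm *ᵥ x)) * k) := by
        apply mul_le_mul_of_nonneg_left _ ht0
        exact hcs
      have h4 : t * ((x ⬝ᵥ (Sm *ᵥ x)) * k) ≤ x ⬝ᵥ (Sm *ᵥ x) := by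
        calc t * ((x ⬝ᵥ (Sm *ᵥ x)) * k) = (t * k) * (x ⬝ᵥ (Sm *ᵥ x)) := by ring
        _ ≤ 1 * (x ⬝ᵥ (Sm *ᵥ x)) := mul_le_mul_of_nonneg_right htk hxSm
        _ = x ⬝ᵥ (Sm *ᵥ x) := one_mul _
      rw [hxC]
      linarith
  obtain ⟨B, hB⟩ : ∃ B : Matrix (Fin d) (Fin d) ℝ, C = Bᴴ * B := by
    open MatrixOrder in exact CStarAlgebra.nonneg_iff_eq_star_mul_self.mp hCpsd.nonneg
  have hBC : ∀ i j, ∑ l, B l i * B l j = C i j := by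
    intro i j
    rw [hB, Matrix.mul_apply]
    exact Finset.sum_congr rfl fun l _ => by simp [Matrix.conjTranspose_apply]
  set m : Fin d → ℝ := μ - t • v with hm
  set w : ℝ := (1 - p) / (2 * d) with hw
  have hw0 : 0 ≤ w := le_of_lt (div_pos h1p (by linarith))
  set s : ℝ := Real.sqrt (d / (1 - p)) with hs
  have hs2 : s^2 = d / (1 - p) := Real.sq_sqrt (le_of_lt (div_pos hdR h1p))
  set wf : Option (Fin d × Bool) → ℝ := fun x => x.elim p (fun _ => w) with hwf
  set pts : Option (Fin d × Bool) → (Fin d → ℝ) :=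
    fun x => x.elim θ₀ (fun lb => m + (bif lb.2 then s else -s) • (B lb.1)) with hpts
  have hwnn : ∀ x, 0 ≤ wf x := by
    rintro (_ | x)
    · exact le_of_lt hp0
    · exact hw0
  have hwsum : ∑ x, wf x = 1 := by
    rw [Fintype.sum_option]
    simp only [hwf, Option.elim_none, Option.elim_some]
    rw [Finset.sum_const, Finset.card_univ, Fintype.card_prod, Fintype.card_fin,
      Fintype.card_bool, nsmul_eq_mul]
    push_cast
    rw [hw]
    field_simp
    ring
  set Q := discMeasure wf pts with hQ
  have hprob : IsProbabilityMeasure Q := discMeasure_prob wf pts hwnn hwsum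
  refine ⟨Q, hprob, ?_, ?_, ?_⟩
  · -- hasMean
    intro i
    refine ⟨discMeasure_integrable wf pts _, ?_⟩
    rw [hQ, discMeasure_integral wf pts hwnn]
    rw [Fintype.sum_option]
    simp only [hwf, hpts, Option.elim_none, Option.elim_some]
    rw [Fintype.sum_prod_type]
    have hbool : ∀ l : Fin d, ∑ b : Bool,
        w * ((m + (bif b then s else -s) • (B l)) i) = 2*w*m i := by
      intro l
      rw [Fintype.sum_bool]
      simp only [Bool.cond_true, Bool.cond_false, if_true, Pi.add_apply, Pi.smul_apply, smul_eq_mul]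
      ring
    rw [Finset.sum_congr rfl fun l _ => hbool l, Finset.sum_const, Finset.card_univ,
      Fintype.card_fin, nsmul_eq_mul]
    have hmi : m i = μ i - t * v i := by simp [hm, smul_eq_mul]
    have hvi : v i = θ₀ i - μ i := by simp [hv]
    rw [hmi, hvi, hw, ht]
    field_simp
    ring
  · -- hasCov
    intro i j
    refine ⟨discMeasure_integrable wf pts _, ?_⟩
    rw [hQ, discMeasure_integral wf pts hwnn]
    rw [Fintype.sum_option]
    simp only [hwf, hpts, Option.elim_none, Option.elim_some]
    rw [Fintype.sum_prod_type]
    have hbool : ∀ l : Fin d, ∑ b : Bool,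
        w * (((m + (bif b then s else -s) • (B l)) i - μ i) *
             ((m + (bif b then s else -s) • (B l)) j - μ j))
        = 2*w*((m i - μ i)*(m j - μ j)) + (2*w*s^2)*(B l i * B l j) := by
      intro l
      rw [Fintype.sum_bool]
      simp only [Bool.cond_true, Bool.cond_false, if_true, Pi.add_apply, Pi.smul_apply,
        smul_eq_mul]
      ring
    rw [Finset.sum_congr rfl fun l _ => hbool l, Finset.sum_add_distrib, Finset.sum_const,
      Finset.card_univ, Fintype.card_fin, nsmul_eq_mul, ← Finset.mul_sum]
    rw [Finset.sum_congr rfl fun l _ => rfl]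
    have hBCij : ∑ l, B l i * B l j = Sm i j - t * (v i * v j) := by
      rw [hBC i j, hCentry i j]
    rw [hBCij]
    have hmi : m i = μ i - t * v i := by simp [hm, smul_eq_mul]
    have hmj : m j = μ j - t * v j := by simp [hm, smul_eq_mul]
    have hvi : v i = θ₀ i - μ i := by simp [hv]
    have hvj : v j = θ₀ j - μ j := by simp [hv]
    rw [hs2, hmi, hmj, hvi, hvj, hw, ht]
    field_simp
    ring
  · -- probability of S
    have := discMeasure_le_toReal wf pts hwnn hwsum (s := S) (i := none) hθ₀
    simpa [hwf] using this

/-- **Multivariate Chebyshev inequality (Marshall–Olkin).** For a nonempty convex set `S`,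
the supremum over all probability measures with mean `μ` and covariance `Σ` of the
probability of `S` equals `1/(1 + κ)`, where `κ` is the squared Mahalanobis distance
from `μ` to `S`. -/
theorem multivariate_chebyshev {d : ℕ} (hd : 1 ≤ d) (μ : Fin d → ℝ)
    (Sm : Matrix (Fin d) (Fin d) ℝ) (hSm : Sm.PosDef) (S : Set (Fin d → ℝ))
    (hne : S.Nonempty) (hconv : Convex ℝ S) :
    sSup { p | ∃ Q : Measure (Fin d → ℝ), IsProbabilityMeasure Q ∧
        hasMean Q μ ∧ hasCov Q μ Sm ∧ p = (Q S).toReal } =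
      1 / (1 + sInf { k | ∃ θ ∈ S, k = (θ - μ) ⬝ᵥ (Sm⁻¹ *ᵥ (θ - μ)) }) := by
  obtain ⟨θs, hθscl, hmincl⟩ := exists_minimizer hd μ hSm.inv (S := S) hne
  have hminS : ∀ θ ∈ S, (θs - μ) ⬝ᵥ (Sm⁻¹ *ᵥ (θs - μ)) ≤ (θ - μ) ⬝ᵥ (Sm⁻¹ *ᵥ (θ - μ)) :=
    fun θ hθ => hmincl θ (subset_closure hθ)
  have hfo := first_order μ hSm.inv hconv hθscl hmincl
  have hκeq := qmin_eq_sInf μ Sm⁻¹ hne hθscl hminS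
  rw [← hκeq]
  set κ := (θs - μ) ⬝ᵥ (Sm⁻¹ *ᵥ (θs - μ)) with hκdef
  have hκ0 : 0 ≤ κ := psd_nonneg hSm.inv.posSemidef _
  have h1κ : (0:ℝ) < 1 + κ := by linarith
  apply csSup_eq_of_forall_le_of_forall_lt_exists_gt
  · -- nonemptiness of the LHS set
    obtain ⟨θ₁, hθ₁⟩ := hne
    set k1 := (θ₁ - μ) ⬝ᵥ (Sm⁻¹ *ᵥ (θ₁ - μ)) with hk1
    have hk10 : 0 ≤ k1 := psd_nonneg hSm.inv.posSemidef _
    have h2k1 : (0:ℝ) < 2*(1+k1) := by linarith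
    obtain ⟨Q, h1, h2, h3, _⟩ := construct hd μ hSm hθ₁ (p := 1/(2*(1+k1)))
      (by positivity)
      (by rw [div_lt_one h2k1]; linarith)
      (by rw [← hk1, div_mul_eq_mul_div, one_mul, div_le_one h2k1]; linarith)
    exact ⟨(Q S).toReal, Q, h1, h2, h3, rfl⟩
  · rintro x ⟨Q, hQ, hm, hc, rfl⟩
    exact upper_bound μ hSm hfo hQ hm hc
  · intro y hy
    set z := max y 0 with hz
    have hz0 : 0 ≤ z := le_max_right _ _
    have hzlt : z < 1/(1+κ) := max_lt hy (by positivity)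
    set p := (z + 1/(1+κ))/2 with hp
    have hp0 : 0 < p := by positivity
    have hpy : y < p := by
      have : y ≤ z := le_max_left _ _
      have h2 : z < p := by rw [hp]; linarith
      linarith
    have hplt : p < 1/(1+κ) := by rw [hp]; linarith
    have hp1 : p < 1 := by
      have : 1/(1+κ) ≤ 1 := by
        rw [div_le_one h1κ]; linarith
      linarith
    have hinv : 1 + κ < 1/p := by
      rw [lt_div_iff₀ hp0]
      have h2 := mul_lt_mul_of_pos_right hplt h1κ
      rw [one_div_mul_cancel (ne_of_gt h1κ)] at h2
      rw [mul_comm]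
      linarith
    have hqne : {k | ∃ θ ∈ S, k = (θ - μ) ⬝ᵥ (Sm⁻¹ *ᵥ (θ - μ))}.Nonempty := by
      obtain ⟨θ₁, hθ₁⟩ := hne
      exact ⟨_, θ₁, hθ₁, rfl⟩
    have hslt : sInf {k | ∃ θ ∈ S, k = (θ - μ) ⬝ᵥ (Sm⁻¹ *ᵥ (θ - μ))} < 1/p - 1 := by
      rw [← hκeq]; linarith
    obtain ⟨k, hkmem, hklt⟩ := exists_lt_of_csInf_lt hqne hslt
    obtain ⟨θ₀, hθ₀S, hkeq⟩ := hkmem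
    have hpk : p * (1 + (θ₀ - μ) ⬝ᵥ (Sm⁻¹ *ᵥ (θ₀ - μ))) ≤ 1 := by
      rw [← hkeq]
      have h3 : 1 + k < 1/p := by linarith
      have := mul_lt_mul_of_pos_left h3 hp0
      rw [mul_one_div, div_self (ne_of_gt hp0)] at this
      linarith
    obtain ⟨Q, h1', h2', h3', h4'⟩ := construct hd μ hSm hθ₀S hp0 hp1 hpk
    exact ⟨(Q S).toReal, ⟨Q, h1', h2', h3', rfl⟩, lt_of_lt_of_le hpy h4'⟩

end
end

section
/- Let d ≥ 1, let μ̂ ∈ ℝ^d, let Σ̂ ∈ ℝ^{d×d} be symmetric positive definite, let x_j ∈ ℝ^d, and let Δ > 0. Suppose every optimal solution x of the problem max_{‖x − x_j‖₂ ≤ Δ} min_{θ : θ^⊤x = 0} sqrt((θ − μ̂)^⊤ Σ̂^{-1} (θ − μ̂)) satisfies x^⊤μ̂ > 0. Then this max–min problem has the same optimal solutions as the fractional program max { x^⊤μ̂ / sqrt(x^⊤ Σ̂ x) : x ∈ ℝ^d, ‖x − x_j‖₂ ≤ Δ }. -/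
open MeasureTheory Matrix Classical

noncomputable section

/-- Mahalanobis distance (w.r.t. `Shat`) from `μhat` to the hyperplane `{θ : θᵀx = 0}`. -/
noncomputable def mahalDistToHyperplane {d : ℕ} (Shat : Matrix (Fin d) (Fin d) ℝ)
    (μhat x : Fin d → ℝ) : ℝ :=
  sInf { s | ∃ θ : Fin d → ℝ, θ ⬝ᵥ x = 0 ∧
    s = Real.sqrt ((θ - μhat) ⬝ᵥ (Shat⁻¹ *ᵥ (θ - μhat))) }

section Aux

variable {d : ℕ}

lemma MY_cont_dot (w : Fin d → ℝ) : Continuous fun v : Fin d → ℝ => v ⬝ᵥ w := by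
  unfold dotProduct; fun_prop

lemma MY_cont_dotself : Continuous fun v : Fin d → ℝ => v ⬝ᵥ v := by
  unfold dotProduct; fun_prop

lemma MY_cont_quad (S : Matrix (Fin d) (Fin d) ℝ) :
    Continuous fun v : Fin d → ℝ => v ⬝ᵥ (S *ᵥ v) := by
  simp only [dotProduct, mulVec, dotProduct]; fun_prop

lemma MY_sq_le_dot (v : Fin d → ℝ) (i : Fin d) : (v i)^2 ≤ v ⬝ᵥ v := by
  rw [dotProduct]
  have h := Finset.single_le_sum (f := fun j => v j * v j)
    (fun j _ => mul_self_nonneg (v j)) (Finset.mem_univ i)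
  nlinarith

lemma MY_dot_self_nonneg (v : Fin d → ℝ) : 0 ≤ v ⬝ᵥ v :=
  Finset.sum_nonneg fun i _ => mul_self_nonneg (v i)

lemma MY_dot_self_pos {v : Fin d → ℝ} (hv : v ≠ 0) : 0 < v ⬝ᵥ v := by
  obtain ⟨i, hi⟩ := Function.ne_iff.mp hv
  have h1 := MY_sq_le_dot v i
  have h2 : 0 < (v i)^2 := by rw [sq]; exact mul_self_pos.mpr hi
  linarith

lemma MY_sphere_compact : IsCompact {v : Fin d → ℝ | v ⬝ᵥ v = 1} := by
  have hcl : IsClosed {v : Fin d → ℝ | v ⬝ᵥ v = 1} := isClosed_eq MY_cont_dotself continuous_const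
  refine (isCompact_closedBall (0 : Fin d → ℝ) 1).of_isClosed_subset hcl ?_
  intro v hv
  rw [Set.mem_setOf] at hv
  simp only [Metric.mem_closedBall]
  rw [dist_pi_le_iff zero_le_one]
  intro i
  rw [Real.dist_eq]
  simp only [Pi.zero_apply, sub_zero]
  have h1 : (v i)^2 ≤ v ⬝ᵥ v := MY_sq_le_dot v i
  have h2 : |v i|^2 ≤ 1 := by rw [sq_abs]; nlinarith
  nlinarith [abs_nonneg (v i)]

lemma MY_euclNorm_eq (v : Fin d → ℝ) : euclNorm v = Real.sqrt (v ⬝ᵥ v) := by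
  unfold euclNorm
  congr 1
  exact Finset.sum_congr rfl fun i _ => (sq (v i)) ▸ rfl

lemma MY_euclNorm_le_iff (u : Fin d → ℝ) {Δ : ℝ} (hΔ : 0 ≤ Δ) :
    euclNorm u ≤ Δ ↔ u ⬝ᵥ u ≤ Δ^2 := by
  rw [MY_euclNorm_eq]
  constructor
  · intro h
    have := Real.sq_sqrt (MY_dot_self_nonneg u)
    nlinarith [Real.sqrt_nonneg (u ⬝ᵥ u)]
  · intro h
    have : Real.sqrt (u ⬝ᵥ u) ≤ Real.sqrt (Δ^2) := Real.sqrt_le_sqrt h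
    rwa [Real.sqrt_sq hΔ] at this

lemma MY_dot_sub_expand (z w : Fin d → ℝ) :
    (z - w) ⬝ᵥ (z - w) = z ⬝ᵥ z - 2 * (z ⬝ᵥ w) + w ⬝ᵥ w := by
  rw [sub_dotProduct, dotProduct_sub, dotProduct_sub, dotProduct_comm w z]
  ring

lemma MY_key_lb (μhat : Fin d → ℝ) (Shat : Matrix (Fin d) (Fin d) ℝ)
    (hS : Shat.PosDef) (x θ : Fin d → ℝ) (hx : x ≠ 0) (hθ : θ ⬝ᵥ x = 0) :
    (x ⬝ᵥ μhat)^2 / (x ⬝ᵥ (Shat *ᵥ x)) ≤ (θ - μhat) ⬝ᵥ (Shat⁻¹ *ᵥ (θ - μhat)) := by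
  have hsym : Shatᵀ = Shat := by have h := hS.1; simp at h; exact h
  have hq : 0 < x ⬝ᵥ (Shat *ᵥ x) := by simpa using hS.dotProduct_mulVec_pos hx
  set q := x ⬝ᵥ (Shat *ᵥ x) with hqdef
  set c := (x ⬝ᵥ μhat) / q with hcdef
  set u := θ - μhat with hu
  set w := u + c • (Shat *ᵥ x) with hw
  have hinv : ∀ v : Fin d → ℝ, Shat⁻¹ *ᵥ (Shat *ᵥ v) = v := fun v => by
    rw [mulVec_mulVec, nonsing_inv_mul Shat hS.det_pos.ne'.isUnit, one_mulVec]
  have hinv' : ∀ v : Fin d → ℝ, Shat *ᵥ (Shat⁻¹ *ᵥ v) = v := fun v => by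
    rw [mulVec_mulVec, mul_nonsing_inv Shat hS.det_pos.ne'.isUnit, one_mulVec]
  have hswap : ∀ a b : Fin d → ℝ, (Shat *ᵥ a) ⬝ᵥ b = a ⬝ᵥ (Shat *ᵥ b) := fun a b => by
    rw [dotProduct_comm, dotProduct_mulVec, ← mulVec_transpose, hsym, dotProduct_comm]
  have hwx : w ⬝ᵥ x = 0 := by
    have h0 : u ⬝ᵥ x = -(x ⬝ᵥ μhat) := by
      rw [hu, sub_dotProduct, hθ, dotProduct_comm]; ring
    rw [hw, add_dotProduct, h0, smul_dotProduct, hswap, smul_eq_mul, hcdef]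
    field_simp
    rw [hqdef]; ring
  have hux : u = w - c • (Shat *ᵥ x) := by rw [hw]; abel
  have h2 : (Shat *ᵥ x) ⬝ᵥ (Shat⁻¹ *ᵥ w) = 0 := by
    rw [hswap, hinv', dotProduct_comm]; exact hwx
  have h3 : w ⬝ᵥ (Shat⁻¹ *ᵥ (Shat *ᵥ x)) = 0 := by rw [hinv]; exact hwx
  have h4 : (Shat *ᵥ x) ⬝ᵥ (Shat⁻¹ *ᵥ (Shat *ᵥ x)) = q := by rw [hinv, hswap]
  have hexp : u ⬝ᵥ (Shat⁻¹ *ᵥ u) = w ⬝ᵥ (Shat⁻¹ *ᵥ w) + c^2 * q := by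
    rw [hux, sub_dotProduct, mulVec_sub, dotProduct_sub, dotProduct_sub,
      mulVec_smul, dotProduct_smul, smul_dotProduct, smul_dotProduct, dotProduct_smul,
      h2, h3, h4, smul_eq_mul, smul_eq_mul, smul_eq_mul]
    ring
  have hnn : 0 ≤ w ⬝ᵥ (Shat⁻¹ *ᵥ w) := by
    rcases eq_or_ne w 0 with h | h
    · simp [h]
    · exact le_of_lt (by simpa using hS.inv.dotProduct_mulVec_pos h)
  rw [hexp]
  have hc2 : c^2 * q = (x ⬝ᵥ μhat)^2 / q := by
    rw [hcdef]; field_simp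
  linarith

/-- The Mahalanobis distance formula. -/
lemma MY_mahal_eq (μhat : Fin d → ℝ) (Shat : Matrix (Fin d) (Fin d) ℝ)
    (hS : Shat.PosDef) (x : Fin d → ℝ) :
    mahalDistToHyperplane Shat μhat x = |x ⬝ᵥ μhat| / Real.sqrt (x ⬝ᵥ (Shat *ᵥ x)) := by
  rcases eq_or_ne x 0 with rfl | hx
  · have h0 : (0 : ℝ) ∈ { s | ∃ θ : Fin d → ℝ, θ ⬝ᵥ (0 : Fin d → ℝ) = 0 ∧
        s = Real.sqrt ((θ - μhat) ⬝ᵥ (Shat⁻¹ *ᵥ (θ - μhat))) } := ⟨μhat, by simp⟩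
    have hbd : ∀ s ∈ { s | ∃ θ : Fin d → ℝ, θ ⬝ᵥ (0 : Fin d → ℝ) = 0 ∧
        s = Real.sqrt ((θ - μhat) ⬝ᵥ (Shat⁻¹ *ᵥ (θ - μhat))) }, (0:ℝ) ≤ s := by
      rintro s ⟨θ, -, rfl⟩; exact Real.sqrt_nonneg _
    have : mahalDistToHyperplane Shat μhat 0 = 0 :=
      le_antisymm (csInf_le ⟨0, hbd⟩ h0) (le_csInf ⟨0, h0⟩ hbd)
    simp [this]
  · have hq : 0 < x ⬝ᵥ (Shat *ᵥ x) := by simpa using hS.dotProduct_mulVec_pos hx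
    set q := x ⬝ᵥ (Shat *ᵥ x) with hqdef
    set S := { s | ∃ θ : Fin d → ℝ, θ ⬝ᵥ x = 0 ∧
        s = Real.sqrt ((θ - μhat) ⬝ᵥ (Shat⁻¹ *ᵥ (θ - μhat))) } with hSdef
    have hval : |x ⬝ᵥ μhat| / Real.sqrt q = Real.sqrt ((x ⬝ᵥ μhat)^2 / q) := by
      rw [Real.sqrt_div (sq_nonneg _), Real.sqrt_sq_eq_abs]
    set c := (x ⬝ᵥ μhat) / q with hcdef
    have hsym : Shatᵀ = Shat := by have h := hS.1; simp at h; exact h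
    have hinv : ∀ v : Fin d → ℝ, Shat⁻¹ *ᵥ (Shat *ᵥ v) = v := fun v => by
      rw [mulVec_mulVec, nonsing_inv_mul Shat hS.det_pos.ne'.isUnit, one_mulVec]
    have hswap : ∀ a b : Fin d → ℝ, (Shat *ᵥ a) ⬝ᵥ b = a ⬝ᵥ (Shat *ᵥ b) := fun a b => by
      rw [dotProduct_comm, dotProduct_mulVec, ← mulVec_transpose, hsym, dotProduct_comm]
    have hmem : |x ⬝ᵥ μhat| / Real.sqrt q ∈ S := by
      refine ⟨μhat - c • (Shat *ᵥ x), ?_, ?_⟩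
      · rw [sub_dotProduct, smul_dotProduct, hswap, smul_eq_mul, hcdef, dotProduct_comm]
        field_simp
        rw [hqdef]; ring
      · have hθμ : μhat - c • (Shat *ᵥ x) - μhat = -(c • (Shat *ᵥ x)) := by abel
        rw [hθμ, hval]
        congr 1
        rw [mulVec_neg, mulVec_smul, neg_dotProduct, dotProduct_neg, neg_neg,
          smul_dotProduct, dotProduct_smul, hinv, smul_eq_mul, smul_eq_mul, hswap, hcdef]
        field_simp
        ring
    have hlb : ∀ s ∈ S, |x ⬝ᵥ μhat| / Real.sqrt q ≤ s := by
      rintro s ⟨θ, hθ, rfl⟩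
      rw [hval]
      exact Real.sqrt_le_sqrt (MY_key_lb μhat Shat hS x θ hx hθ)
    exact le_antisymm (csInf_le ⟨_, hlb⟩ hmem) (le_csInf ⟨_, hmem⟩ hlb)

end Aux


/-- fractional objective -/
noncomputable def MYr {d : ℕ} (μhat : Fin d → ℝ) (Shat : Matrix (Fin d) (Fin d) ℝ)
    (x : Fin d → ℝ) : ℝ := (x ⬝ᵥ μhat) / Real.sqrt (x ⬝ᵥ (Shat *ᵥ x))

/-- abs fractional objective -/
noncomputable def MYg {d : ℕ} (μhat : Fin d → ℝ) (Shat : Matrix (Fin d) (Fin d) ℝ)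
    (x : Fin d → ℝ) : ℝ := |x ⬝ᵥ μhat| / Real.sqrt (x ⬝ᵥ (Shat *ᵥ x))

section Aux2

variable {d : ℕ} (μhat : Fin d → ℝ) (Shat : Matrix (Fin d) (Fin d) ℝ)

lemma MYg_nonneg (x : Fin d → ℝ) : 0 ≤ MYg μhat Shat x := by
  unfold MYg; positivity

lemma MYr_le_g (x : Fin d → ℝ) : MYr μhat Shat x ≤ MYg μhat Shat x := by
  unfold MYr MYg
  rcases eq_or_lt_of_le (Real.sqrt_nonneg (x ⬝ᵥ (Shat *ᵥ x))) with h | h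
  · rw [← h]; simp
  · gcongr
    exact le_abs_self _

lemma MYr_zero : MYr μhat Shat 0 = 0 := by unfold MYr; simp

lemma MYg_zero : MYg μhat Shat 0 = 0 := by unfold MYg; simp

lemma MY_Q_smul (t : ℝ) (x : Fin d → ℝ) :
    (t • x) ⬝ᵥ (Shat *ᵥ (t • x)) = t^2 * (x ⬝ᵥ (Shat *ᵥ x)) := by
  rw [mulVec_smul, dotProduct_smul, smul_dotProduct, smul_eq_mul, smul_eq_mul]; ring

lemma MY_s_smul {t : ℝ} (ht : 0 ≤ t) (x : Fin d → ℝ) :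
    Real.sqrt ((t • x) ⬝ᵥ (Shat *ᵥ (t • x))) = t * Real.sqrt (x ⬝ᵥ (Shat *ᵥ x)) := by
  rw [MY_Q_smul, Real.sqrt_mul (sq_nonneg t), Real.sqrt_sq ht]

lemma MYr_smul {t : ℝ} (ht : 0 < t) (x : Fin d → ℝ) :
    MYr μhat Shat (t • x) = MYr μhat Shat x := by
  unfold MYr
  rw [MY_s_smul Shat ht.le, smul_dotProduct, smul_eq_mul, mul_div_mul_left _ _ ht.ne']

lemma MYg_smul {t : ℝ} (ht : 0 < t) (x : Fin d → ℝ) :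
    MYg μhat Shat (t • x) = MYg μhat Shat x := by
  unfold MYg
  rw [MY_s_smul Shat ht.le, smul_dotProduct, smul_eq_mul, abs_mul, abs_of_pos ht,
    mul_div_mul_left _ _ ht.ne']

lemma MY_Q_neg (x : Fin d → ℝ) : (-x) ⬝ᵥ (Shat *ᵥ (-x)) = x ⬝ᵥ (Shat *ᵥ x) := by
  rw [mulVec_neg, neg_dotProduct, dotProduct_neg, neg_neg]

lemma MYr_neg (x : Fin d → ℝ) : MYr μhat Shat (-x) = -MYr μhat Shat x := by
  unfold MYr
  rw [MY_Q_neg, neg_dotProduct, neg_div]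

lemma MYg_neg (x : Fin d → ℝ) : MYg μhat Shat (-x) = MYg μhat Shat x := by
  unfold MYg
  rw [MY_Q_neg, neg_dotProduct, abs_neg]

lemma MY_s_pos (hS : Shat.PosDef) {x : Fin d → ℝ} (hx : x ≠ 0) :
    0 < Real.sqrt (x ⬝ᵥ (Shat *ᵥ x)) :=
  Real.sqrt_pos.mpr (by simpa using hS.dotProduct_mulVec_pos hx)

lemma MYr_contAt (hS : Shat.PosDef) {x : Fin d → ℝ} (hx : x ≠ 0) :
    ContinuousAt (MYr μhat Shat) x := by
  unfold MYr
  exact ((MY_cont_dot μhat).continuousAt).div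
    ((Real.continuous_sqrt.comp (MY_cont_quad Shat)).continuousAt)
    (MY_s_pos Shat hS hx).ne'

lemma MYg_contOn (hS : Shat.PosDef) {K : Set (Fin d → ℝ)} (hK : ∀ x ∈ K, x ≠ 0) :
    ContinuousOn (MYg μhat Shat) K := by
  unfold MYg
  refine ContinuousOn.div ((MY_cont_dot μhat).abs.continuousOn)
    ((Real.continuous_sqrt.comp (MY_cont_quad Shat)).continuousOn) ?_
  exact fun x hx => (MY_s_pos Shat hS (hK x hx)).ne'

end Aux2

/-- If every optimal solution of the max–min Mahalanobis correction problem over the ball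
of radius `Δ` around `x_j` satisfies `xᵀμ̂ > 0`, then the max–min problem has the same
optimal solutions as the fractional program `max { xᵀμ̂ / sqrt(xᵀΣ̂x) : ‖x - x_j‖₂ ≤ Δ }`. -/
theorem maxmin_eq_fractional_program {d : ℕ} (hd : 1 ≤ d) (μhat : Fin d → ℝ)
    (Shat : Matrix (Fin d) (Fin d) ℝ) (hShat : Shat.PosDef) (xj : Fin d → ℝ)
    (Δ : ℝ) (hΔ : 0 < Δ)
    (hpos : ∀ x : Fin d → ℝ, euclNorm (x - xj) ≤ Δ →
      (∀ y : Fin d → ℝ, euclNorm (y - xj) ≤ Δ →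
        mahalDistToHyperplane Shat μhat y ≤ mahalDistToHyperplane Shat μhat x) →
      0 < x ⬝ᵥ μhat) :
    { x : Fin d → ℝ | euclNorm (x - xj) ≤ Δ ∧
        ∀ y : Fin d → ℝ, euclNorm (y - xj) ≤ Δ →
          mahalDistToHyperplane Shat μhat y ≤ mahalDistToHyperplane Shat μhat x } =
    { x : Fin d → ℝ | euclNorm (x - xj) ≤ Δ ∧
        ∀ y : Fin d → ℝ, euclNorm (y - xj) ≤ Δ →
          (y ⬝ᵥ μhat) / Real.sqrt (y ⬝ᵥ (Shat *ᵥ y)) ≤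
            (x ⬝ᵥ μhat) / Real.sqrt (x ⬝ᵥ (Shat *ᵥ x)) } := by
  have hΔ0 : (0:ℝ) ≤ Δ := hΔ.le
  have hM := MY_mahal_eq μhat Shat hShat
  set B : Set (Fin d → ℝ) := {z | euclNorm (z - xj) ≤ Δ} with hB
  have hBmem : ∀ z : Fin d → ℝ, euclNorm (z - xj) ≤ Δ ↔ z ∈ B := fun z => Iff.rfl
  have hxjB : xj ∈ B := by
    have : euclNorm (xj - xj) ≤ Δ := by
      rw [sub_self, MY_euclNorm_eq]
      simp [hΔ0]
    exact this
  have hmemB : ∀ z : Fin d → ℝ, z ∈ B ↔ z ⬝ᵥ z - 2*(z ⬝ᵥ xj) + xj ⬝ᵥ xj ≤ Δ^2 := fun z => by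
    rw [← hBmem, MY_euclNorm_le_iff _ hΔ0, MY_dot_sub_expand]
  have e1 : { x : Fin d → ℝ | euclNorm (x - xj) ≤ Δ ∧
        ∀ y : Fin d → ℝ, euclNorm (y - xj) ≤ Δ →
          mahalDistToHyperplane Shat μhat y ≤ mahalDistToHyperplane Shat μhat x } =
      { x : Fin d → ℝ | x ∈ B ∧ ∀ y ∈ B, MYg μhat Shat y ≤ MYg μhat Shat x } := by
    ext z
    simp only [Set.mem_setOf_eq, hM, hBmem]
    exact Iff.rfl
  have e2 : { x : Fin d → ℝ | euclNorm (x - xj) ≤ Δ ∧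
        ∀ y : Fin d → ℝ, euclNorm (y - xj) ≤ Δ →
          (y ⬝ᵥ μhat) / Real.sqrt (y ⬝ᵥ (Shat *ᵥ y)) ≤
            (x ⬝ᵥ μhat) / Real.sqrt (x ⬝ᵥ (Shat *ᵥ x)) } =
      { x : Fin d → ℝ | x ∈ B ∧ ∀ y ∈ B, MYr μhat Shat y ≤ MYr μhat Shat x } := by
    ext z
    simp only [Set.mem_setOf_eq, hBmem]
    exact Iff.rfl
  rw [e1, e2]
  have hpos' : ∀ x ∈ B, (∀ y ∈ B, MYg μhat Shat y ≤ MYg μhat Shat x) → 0 < x ⬝ᵥ μhat := by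
    intro x hx h
    exact hpos x ((hBmem x).mpr hx) (fun y hy => by
      rw [hM, hM]; exact h y ((hBmem y).mp hy))
  ext x
  simp only [Set.mem_setOf_eq]
  constructor
  · rintro ⟨hxB, hmax⟩
    refine ⟨hxB, fun y hy => ?_⟩
    have hfx : 0 < x ⬝ᵥ μhat := hpos' x hxB hmax
    have hgr : MYg μhat Shat x = MYr μhat Shat x := by
      unfold MYg MYr; rw [abs_of_pos hfx]
    calc MYr μhat Shat y ≤ MYg μhat Shat y := MYr_le_g _ _ _
      _ ≤ MYg μhat Shat x := hmax y hy
      _ = MYr μhat Shat x := hgr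
  · rintro ⟨hxB, hmax⟩
    have hexist : ∃ m ∈ B, ∀ z ∈ B, MYg μhat Shat z ≤ MYg μhat Shat m := by
      rcases lt_or_ge (Δ^2) (xj ⬝ᵥ xj) with hout | hin
      · -- 0 ∉ B : compactness of B suffices
        have hcontN : Continuous fun z : Fin d → ℝ => euclNorm (z - xj) := by
          have hrw : (fun z : Fin d → ℝ => euclNorm (z - xj))
              = fun z => Real.sqrt ((z - xj) ⬝ᵥ (z - xj)) := funext fun z => MY_euclNorm_eq _
          rw [hrw]
          exact Real.continuous_sqrt.comp (MY_cont_dotself.comp (by fun_prop))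
        have hBcl : IsClosed B := isClosed_le hcontN continuous_const
        have hBcpt : IsCompact B := by
          refine (isCompact_closedBall xj Δ).of_isClosed_subset hBcl ?_
          intro z hz
          rw [Metric.mem_closedBall, dist_pi_le_iff hΔ0]
          intro i
          rw [Real.dist_eq]
          have h1 : ((z - xj) i)^2 ≤ (z - xj) ⬝ᵥ (z - xj) := MY_sq_le_dot (z - xj) i
          have h1' : (z i - xj i)^2 ≤ (z - xj) ⬝ᵥ (z - xj) := by simpa using h1
          have h2 : (z - xj) ⬝ᵥ (z - xj) ≤ Δ^2 := (MY_euclNorm_le_iff _ hΔ0).1 hz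
          nlinarith [abs_nonneg (z i - xj i), sq_abs (z i - xj i)]
        have hne : ∀ z ∈ B, z ≠ 0 := by
          intro z hz h0
          subst h0
          have := (hmemB 0).mp hz
          simp only [zero_dotProduct, mul_zero, sub_zero, zero_sub, zero_add] at this
          linarith
        obtain ⟨m, hmB, hm⟩ := hBcpt.exists_isMaxOn ⟨xj, hxjB⟩
          (MYg_contOn μhat Shat hShat hne)
        exact ⟨m, hmB, fun z hz => hm hz⟩
      · -- xj ⬝ᵥ xj ≤ Δ^2 : use the unit sphere
        set i0 : Fin d := ⟨0, hd⟩ with hi0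
        have hv0 : (Pi.single i0 1 : Fin d → ℝ) ⬝ᵥ Pi.single i0 1 = 1 := by
          rw [dotProduct, Finset.sum_eq_single i0]
          · simp
          · intro b _ hb; simp [Pi.single_apply, hb]
          · intro h; exact absurd (Finset.mem_univ i0) h
        have hSne : ∀ z ∈ {v : Fin d → ℝ | v ⬝ᵥ v = 1}, z ≠ 0 := by
          intro z hz h0
          rw [Set.mem_setOf, h0] at hz
          simp at hz
        obtain ⟨v, hvS, hv⟩ := MY_sphere_compact.exists_isMaxOn ⟨Pi.single i0 1, hv0⟩
          (MYg_contOn μhat Shat hShat hSne)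
        rw [Set.mem_setOf] at hvS
        have hcov : ∀ z ∈ B, MYg μhat Shat z ≤ MYg μhat Shat v := by
          intro z hz
          rcases eq_or_ne z 0 with rfl | hz0
          · rw [MYg_zero]; exact MYg_nonneg μhat Shat v
          · have hzz : 0 < z ⬝ᵥ z := MY_dot_self_pos hz0
            set t := (Real.sqrt (z ⬝ᵥ z))⁻¹ with ht
            have htpos : 0 < t := inv_pos.mpr (Real.sqrt_pos.mpr hzz)
            have hts : (t • z) ⬝ᵥ (t • z) = 1 := by
              rw [smul_dotProduct, dotProduct_smul, smul_eq_mul, smul_eq_mul, ht]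
              rw [← Real.mul_self_sqrt hzz.le]
              have hs0 : Real.sqrt (z ⬝ᵥ z) ≠ 0 := (Real.sqrt_pos.mpr hzz).ne'
              field_simp
              rw [Real.sqrt_sq (Real.sqrt_nonneg _)]
            calc MYg μhat Shat z = MYg μhat Shat (t • z) := (MYg_smul μhat Shat htpos z).symm
              _ ≤ MYg μhat Shat v := hv hts
        obtain ⟨u, huS, hug, hua⟩ : ∃ u : Fin d → ℝ, u ⬝ᵥ u = 1 ∧
            MYg μhat Shat u = MYg μhat Shat v ∧ 0 ≤ u ⬝ᵥ xj := by
          rcases le_or_gt 0 (v ⬝ᵥ xj) with h | h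
          · exact ⟨v, hvS, rfl, h⟩
          · refine ⟨-v, ?_, MYg_neg μhat Shat v, ?_⟩
            · rw [neg_dotProduct, dotProduct_neg, neg_neg]; exact hvS
            · rw [neg_dotProduct]; linarith
        by_cases hgood : ∃ t : ℝ, 0 < t ∧ t^2 - 2*t*(u ⬝ᵥ xj) + xj ⬝ᵥ xj ≤ Δ^2
        · obtain ⟨t, htpos, htle⟩ := hgood
          refine ⟨t • u, ?_, ?_⟩
          · rw [hmemB]
            rw [smul_dotProduct, dotProduct_smul, smul_dotProduct, smul_eq_mul,
              smul_eq_mul, smul_eq_mul, huS]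
            calc t * (t * 1) - 2 * (t * (u ⬝ᵥ xj)) + xj ⬝ᵥ xj
                = t^2 - 2*t*(u ⬝ᵥ xj) + xj ⬝ᵥ xj := by ring
              _ ≤ Δ^2 := htle
          · intro z hz
            rw [MYg_smul μhat Shat htpos]
            exact (hcov z hz).trans_eq hug.symm
        · -- the hard boundary case
          push_neg at hgood
          have hu0 : u ⬝ᵥ xj = 0 := by
            by_contra h
            have hapos : 0 < u ⬝ᵥ xj := lt_of_le_of_ne hua (Ne.symm h)
            have := hgood (2*(u ⬝ᵥ xj)) (by linarith)
            nlinarith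
          have heq : xj ⬝ᵥ xj = Δ^2 := by
            refine le_antisymm hin ?_
            by_contra h
            push_neg at h
            have hδ : 0 < Δ^2 - xj ⬝ᵥ xj := by linarith
            have := hgood (Real.sqrt (Δ^2 - xj ⬝ᵥ xj)) (Real.sqrt_pos.mpr hδ)
            rw [hu0] at this
            nlinarith [Real.sq_sqrt hδ.le]
          rcases le_or_gt (MYg μhat Shat u) 0 with hG | hG
          · refine ⟨xj, hxjB, fun z hz => ?_⟩
            calc MYg μhat Shat z ≤ MYg μhat Shat v := hcov z hz
              _ = MYg μhat Shat u := hug.symm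
              _ ≤ 0 := hG
              _ ≤ MYg μhat Shat xj := MYg_nonneg μhat Shat xj
          · obtain ⟨w, hwS, hwa, hwg, hwf⟩ : ∃ w : Fin d → ℝ, w ⬝ᵥ w = 1 ∧ w ⬝ᵥ xj = 0 ∧
                MYg μhat Shat w = MYg μhat Shat u ∧ 0 ≤ w ⬝ᵥ μhat := by
              rcases le_or_gt 0 (u ⬝ᵥ μhat) with h | h
              · exact ⟨u, huS, hu0, rfl, h⟩
              · refine ⟨-u, ?_, ?_, MYg_neg μhat Shat u, ?_⟩
                · rw [neg_dotProduct, dotProduct_neg, neg_neg]; exact huS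
                · rw [neg_dotProduct, hu0, neg_zero]
                · rw [neg_dotProduct]; linarith
            have hw0 : w ≠ 0 := by
              intro h; rw [h] at hwS; simp at hwS
            have hxj2 : 0 < xj ⬝ᵥ xj := by rw [heq]; positivity
            have hstep : ∀ ε : ℝ, 0 < ε →
                MYr μhat Shat (w + ε • xj) ≤ MYr μhat Shat x := by
              intro ε hε
              set p := w + ε • xj with hp
              have hpxj : p ⬝ᵥ xj = ε * (xj ⬝ᵥ xj) := by
                rw [hp, add_dotProduct, hwa, smul_dotProduct, smul_eq_mul, zero_add]
              have hpxjpos : 0 < p ⬝ᵥ xj := by rw [hpxj]; positivity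
              have hp0 : p ≠ 0 := by
                intro h; rw [h, zero_dotProduct] at hpxjpos; exact lt_irrefl 0 hpxjpos
              have hpp : 0 < p ⬝ᵥ p := MY_dot_self_pos hp0
              set t := 2*(p ⬝ᵥ xj)/(p ⬝ᵥ p) with htdef
              have htpos : 0 < t := by positivity
              have htB : t • p ∈ B := by
                rw [hmemB]
                rw [smul_dotProduct, dotProduct_smul, smul_dotProduct, smul_eq_mul,
                  smul_eq_mul, smul_eq_mul]
                have : t * (t * (p ⬝ᵥ p)) - 2 * (t * (p ⬝ᵥ xj)) = 0 := by
                  rw [htdef]; field_simp; ring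
                rw [heq] at *
                nlinarith [this]
              have := hmax (t • p) htB
              rwa [MYr_smul μhat Shat htpos] at this
            have hwcont : ContinuousAt (fun ε : ℝ => MYr μhat Shat (w + ε • xj)) 0 := by
              unfold MYr
              have hc1 : Continuous fun ε : ℝ => w + ε • xj := by fun_prop
              refine ContinuousAt.div
                (((MY_cont_dot μhat).comp hc1).continuousAt)
                ((Real.continuous_sqrt.comp ((MY_cont_quad Shat).comp hc1)).continuousAt) ?_
              simp only [Function.comp, zero_smul, add_zero]
              exact (MY_s_pos Shat hShat hw0).ne'
            have hlim : Filter.Tendsto (fun ε : ℝ => MYr μhat Shat (w + ε • xj))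
                (nhdsWithin 0 (Set.Ioi 0)) (nhds (MYr μhat Shat w)) := by
              have := hwcont.tendsto
              simp only [zero_smul, add_zero] at this
              exact this.mono_left nhdsWithin_le_nhds
            have hle : MYr μhat Shat w ≤ MYr μhat Shat x :=
              le_of_tendsto hlim (Filter.eventually_iff_exists_mem.mpr
                ⟨Set.Ioi 0, self_mem_nhdsWithin, fun ε hε => hstep ε hε⟩)
            have hrw : MYr μhat Shat w = MYg μhat Shat w := by
              unfold MYg MYr; rw [abs_of_nonneg hwf]
            have hrwpos : 0 < MYr μhat Shat w := by
              rw [hrw, hwg]; exact hG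
            refine ⟨x, hxB, fun z hz => ?_⟩
            calc MYg μhat Shat z ≤ MYg μhat Shat v := hcov z hz
              _ = MYg μhat Shat u := hug.symm
              _ = MYg μhat Shat w := hwg.symm
              _ = MYr μhat Shat w := hrw.symm
              _ ≤ MYr μhat Shat x := hle
              _ ≤ MYg μhat Shat x := MYr_le_g _ _ _
    obtain ⟨m, hmB, hm⟩ := hexist
    have hfm : 0 < m ⬝ᵥ μhat := hpos' m hmB hm
    have hgm : MYg μhat Shat m = MYr μhat Shat m := by
      unfold MYg MYr; rw [abs_of_pos hfm]
    refine ⟨hxB, fun y hy => ?_⟩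
    calc MYg μhat Shat y ≤ MYg μhat Shat m := hm y hy
      _ = MYr μhat Shat m := hgm
      _ ≤ MYr μhat Shat x := hmax m hmB
      _ ≤ MYg μhat Shat x := MYr_le_g _ _ _

end
end
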